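/- arXiv:2109.05254 — 16 statements merged into one kernel-verified Lean document; each statement's English description precedes it below -/
import Mathlib

section
/- Let I ⊆ ℝ be an open interval, u : I → ℝ a C² function with 1 − u'(s)² > 0 for all s ∈ I, and v = (v₁,v₂,v₃) ∈ ℝ³. Define X(s,t) = (t, s, u(s)) (a cylindrical surface with rulings parallel to the spacelike vector (1,0,0)). Then X satisfies the translating soliton equation with respect to v at every point of I × ℝ if and only if u''(s) = (1 − u'(s)²)(v₂ u'(s) − v₃) for all s ∈ I. -/
noncomputable section

/-- The Lorentzian (Minkowski) inner product on ℝ³: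
`⟨a,b⟩ = a₁b₁ + a₂b₂ − a₃b₃`. -/
def mink (a b : Fin 3 → ℝ) : ℝ := a 0 * b 0 + a 1 * b 1 - a 2 * b 2

/-- Determinant of the 3×3 matrix with rows `a`, `b`, `c`. -/
def det3 (a b c : Fin 3 → ℝ) : ℝ :=
  a 0 * (b 1 * c 2 - b 2 * c 1) - a 1 * (b 0 * c 2 - b 2 * c 0)
    + a 2 * (b 0 * c 1 - b 1 * c 0)

/-- Partial derivative `X_s` of a parametrized surface `X(s,t)`. -/
def pS (X : ℝ → ℝ → Fin 3 → ℝ) (s t : ℝ) : Fin 3 → ℝ := deriv (fun a => X a t) s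

/-- Partial derivative `X_t`. -/
def pT (X : ℝ → ℝ → Fin 3 → ℝ) (s t : ℝ) : Fin 3 → ℝ := deriv (fun b => X s b) t

/-- Second partial derivative `X_ss`. -/
def pSS (X : ℝ → ℝ → Fin 3 → ℝ) (s t : ℝ) : Fin 3 → ℝ := deriv (fun a => pS X a t) s

/-- Mixed second partial derivative `X_st`. -/
def pST (X : ℝ → ℝ → Fin 3 → ℝ) (s t : ℝ) : Fin 3 → ℝ := deriv (fun a => pT X a t) s

/-- Second partial derivative `X_tt`. -/
def pTT (X : ℝ → ℝ → Fin 3 → ℝ) (s t : ℝ) : Fin 3 → ℝ := deriv (fun b => pT X s b) t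

/-- Coefficient `E = ⟨X_s, X_s⟩` of the first fundamental form. -/
def coefE (X : ℝ → ℝ → Fin 3 → ℝ) (s t : ℝ) : ℝ := mink (pS X s t) (pS X s t)

/-- Coefficient `F = ⟨X_s, X_t⟩` of the first fundamental form. -/
def coefF (X : ℝ → ℝ → Fin 3 → ℝ) (s t : ℝ) : ℝ := mink (pS X s t) (pT X s t)

/-- Coefficient `G = ⟨X_t, X_t⟩` of the first fundamental form. -/
def coefG (X : ℝ → ℝ → Fin 3 → ℝ) (s t : ℝ) : ℝ := mink (pT X s t) (pT X s t)

/-- `EG − F²` at `(s,t)`. -/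
def disc (X : ℝ → ℝ → Fin 3 → ℝ) (s t : ℝ) : ℝ :=
  coefE X s t * coefG X s t - coefF X s t ^ 2

/-- The translating soliton equation with respect to the velocity `v` at the point `(s,t)`:
`E·det(X_s,X_t,X_tt) − 2F·det(X_s,X_t,X_st) + G·det(X_s,X_t,X_ss)
  = −|EG − F²|·det(X_s,X_t,v)`. -/
def SolitonEqAt (X : ℝ → ℝ → Fin 3 → ℝ) (v : Fin 3 → ℝ) (s t : ℝ) : Prop :=
  coefE X s t * det3 (pS X s t) (pT X s t) (pTT X s t)
    - 2 * coefF X s t * det3 (pS X s t) (pT X s t) (pST X s t)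
    + coefG X s t * det3 (pS X s t) (pT X s t) (pSS X s t)
  = -|disc X s t| * det3 (pS X s t) (pT X s t) v

lemma hasDerivAt_vec3 {f g h : ℝ → ℝ} {f' g' h' x : ℝ}
    (hf : HasDerivAt f f' x) (hg : HasDerivAt g g' x) (hh : HasDerivAt h h' x) :
    HasDerivAt (fun a => ![f a, g a, h a]) ![f', g', h'] x := by
  rw [hasDerivAt_pi]
  intro i
  fin_cases i <;> simpa using (by assumption : _)

lemma key (I : Set ℝ) (hIopen : IsOpen I)
    (u : ℝ → ℝ) (hu : ContDiffOn ℝ 2 u I)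
    (hsp : ∀ s ∈ I, 1 - (deriv u s) ^ 2 > 0)
    (v₁ v₂ v₃ : ℝ) {s : ℝ} (hs : s ∈ I) (t : ℝ) :
    SolitonEqAt (fun s t => ![t, s, u s]) ![v₁, v₂, v₃] s t ↔
      deriv (deriv u) s = (1 - (deriv u s) ^ 2) * (v₂ * deriv u s - v₃) := by
  have hud : ∀ a ∈ I, HasDerivAt u (deriv u a) a := fun a ha =>
    ((hu.contDiffAt (hIopen.mem_nhds ha)).differentiableAt (by norm_num)).hasDerivAt
  have hu' : ContDiffOn ℝ 1 (deriv u) I := hu.deriv_of_isOpen hIopen (by norm_num)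
  have hud2 : HasDerivAt (deriv u) (deriv (deriv u) s) s :=
    ((hu'.contDiffAt (hIopen.mem_nhds hs)).differentiableAt (by norm_num)).hasDerivAt
  -- pS at points of I
  have hpS : ∀ a ∈ I, ∀ t : ℝ, pS (fun s t => ![t, s, u s]) a t = ![(0:ℝ), 1, deriv u a] := by
    intro a ha t
    exact (hasDerivAt_vec3 (hasDerivAt_const a t) (hasDerivAt_id a) (hud a ha)).deriv
  have hpT : ∀ a t : ℝ, pT (fun s t => ![t, s, u s]) a t = ![(1:ℝ), 0, 0] := by
    intro a t
    exact (hasDerivAt_vec3 (hasDerivAt_id t) (hasDerivAt_const t a)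
      (hasDerivAt_const t (u a))).deriv
  have hpTT : pTT (fun s t => ![t, s, u s]) s t = ![(0:ℝ), 0, 0] := by
    have : (fun b => pT (fun s t => ![t, s, u s]) s b) = fun _ => ![(1:ℝ), 0, 0] := by
      funext b; exact hpT s b
    rw [pTT, this, deriv_const]
    funext i; fin_cases i <;> rfl
  have hpST : pST (fun s t => ![t, s, u s]) s t = ![(0:ℝ), 0, 0] := by
    have : (fun a => pT (fun s t => ![t, s, u s]) a t) = fun _ => ![(1:ℝ), 0, 0] := by
      funext a; exact hpT a t
    rw [pST, this, deriv_const]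
    funext i; fin_cases i <;> rfl
  have hpSS : pSS (fun s t => ![t, s, u s]) s t = ![(0:ℝ), 0, deriv (deriv u) s] := by
    have hev : (fun a => pS (fun s t => ![t, s, u s]) a t) =ᶠ[nhds s]
        (fun a => ![(0:ℝ), 1, deriv u a]) := by
      filter_upwards [hIopen.mem_nhds hs] with a ha using hpS a ha t
    rw [pSS, hev.deriv_eq]
    exact (hasDerivAt_vec3 (hasDerivAt_const s (0:ℝ)) (hasDerivAt_const s (1:ℝ)) hud2).deriv
  have habs : |disc (fun s t => ![t, s, u s]) s t| = 1 - (deriv u s) ^ 2 := by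
    rw [disc, coefE, coefF, coefG, hpS s hs t, hpT s t]
    simp [mink, Matrix.cons_val_zero, Matrix.cons_val_one]
    rw [abs_of_pos]
    · ring
    · have := hsp s hs; nlinarith
  rw [SolitonEqAt, habs, coefE, coefF, coefG, hpS s hs t, hpT s t, hpTT, hpST, hpSS]
  simp only [mink, det3, Matrix.cons_val_zero, Matrix.cons_val_one, Matrix.head_cons,
    Matrix.cons_val_two, Matrix.tail_cons]
  constructor
  · intro h; nlinarith [h]
  · intro h; nlinarith [h]

/-- For the cylindrical surface `X(s,t) = (t, s, u(s))` with spacelike rulings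
`(1,0,0)` over an open interval `I`, with `1 − u'² > 0` on `I`, the translating soliton
equation w.r.t. `v = (v₁,v₂,v₃)` holds on `I × ℝ` iff
`u'' = (1 − u'²)(v₂u' − v₃)` on `I`. -/
theorem stmt0 (I : Set ℝ) (hIopen : IsOpen I) (hIconn : I.OrdConnected)
    (u : ℝ → ℝ) (hu : ContDiffOn ℝ 2 u I)
    (hsp : ∀ s ∈ I, 1 - (deriv u s) ^ 2 > 0)
    (v₁ v₂ v₃ : ℝ) :
    (∀ s ∈ I, ∀ t : ℝ,
        SolitonEqAt (fun s t => ![t, s, u s]) ![v₁, v₂, v₃] s t) ↔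
      (∀ s ∈ I,
        deriv (deriv u) s = (1 - (deriv u s) ^ 2) * (v₂ * deriv u s - v₃)) := by
  constructor
  · intro H s hs
    exact (key I hIopen u hu hsp v₁ v₂ v₃ hs 0).1 (H s hs 0)
  · intro H s hs t
    exact (key I hIopen u hu hsp v₁ v₂ v₃ hs t).2 (H s hs)
end
end

section
/- Let I ⊆ ℝ be an open interval, u : I → ℝ a C² function with 1 − u'(s)² < 0 for all s ∈ I, and v = (v₁,v₂,v₃) ∈ ℝ³. Define X(s,t) = (t, s, u(s)). Then X satisfies the translating soliton equation with respect to v at every point of I × ℝ if and only if u''(s) = (u'(s)² − 1)(v₂ u'(s) − v₃) for all s ∈ I. -/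
noncomputable section

/-- For the cylindrical surface `X(s,t) = (t, s, u(s))` over an open interval `I`,
with `1 − u'² < 0` on `I`, the translating soliton equation w.r.t. `v = (v₁,v₂,v₃)` holds on
`I × ℝ` iff `u'' = (u'² − 1)(v₂u' − v₃)` on `I`. -/
theorem stmt1 (I : Set ℝ) (hIopen : IsOpen I) (hIconn : I.OrdConnected)
    (u : ℝ → ℝ) (hu : ContDiffOn ℝ 2 u I)
    (htl : ∀ s ∈ I, 1 - (deriv u s) ^ 2 < 0)
    (v₁ v₂ v₃ : ℝ) :
    (∀ s ∈ I, ∀ t : ℝ,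
        SolitonEqAt (fun s t => ![t, s, u s]) ![v₁, v₂, v₃] s t) ↔
      (∀ s ∈ I,
        deriv (deriv u) s = ((deriv u s) ^ 2 - 1) * (v₂ * deriv u s - v₃)) := by
  set X : ℝ → ℝ → Fin 3 → ℝ := fun s t => ![t, s, u s] with hX
  -- differentiability facts
  have hu1 : ContDiffOn ℝ 1 (deriv u) I := hu.deriv_of_isOpen hIopen (by norm_num)
  have hud : ∀ s ∈ I, DifferentiableAt ℝ u s := fun s hs =>
    ((hu.differentiableOn (by norm_num)).differentiableAt (hIopen.mem_nhds hs))
  have hud2 : ∀ s ∈ I, DifferentiableAt ℝ (deriv u) s := fun s hs =>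
    ((hu1.differentiableOn (by norm_num)).differentiableAt (hIopen.mem_nhds hs))
  have hpS : ∀ t : ℝ, ∀ s ∈ I, pS X s t = ![0, 1, deriv u s] := by
    intro t s hs
    have h : HasDerivAt (fun a => X a t) ![0, 1, deriv u s] s := by
      rw [hasDerivAt_pi]
      intro i
      fin_cases i <;> simp [hX]
      · exact hasDerivAt_const s t
      · exact hasDerivAt_id s
      · exact hud s hs
    exact h.deriv
  have hpT : ∀ s t : ℝ, pT X s t = ![1, 0, 0] := by
    intro s t
    have h : HasDerivAt (fun b => X s b) ![1, 0, 0] t := by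
      rw [hasDerivAt_pi]
      intro i
      fin_cases i <;> simp [hX]
      · exact hasDerivAt_id t
      · exact hasDerivAt_const t s
      · exact hasDerivAt_const t (u s)
    exact h.deriv
  have hpTT : ∀ s t : ℝ, pTT X s t = 0 := by
    intro s t
    unfold pTT
    have : (fun b => pT X s b) = fun _ => (![1,0,0] : Fin 3 → ℝ) := by
      funext b; exact hpT s b
    rw [this, deriv_const]
  have hpST : ∀ s t : ℝ, pST X s t = 0 := by
    intro s t
    unfold pST
    have : (fun a => pT X a t) = fun _ => (![1,0,0] : Fin 3 → ℝ) := by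
      funext a; exact hpT a t
    rw [this, deriv_const]
  have hpSS : ∀ t : ℝ, ∀ s ∈ I, pSS X s t = ![0, 0, deriv (deriv u) s] := by
    intro t s hs
    unfold pSS
    have hev : (fun a => pS X a t) =ᶠ[nhds s] (fun a => ![0, 1, deriv u a]) := by
      filter_upwards [hIopen.mem_nhds hs] with a ha
      exact hpS t a ha
    rw [Filter.EventuallyEq.deriv_eq hev]
    have h : HasDerivAt (fun a => (![0, 1, deriv u a] : Fin 3 → ℝ))
        ![0, 0, deriv (deriv u) s] s := by
      rw [hasDerivAt_pi]
      intro i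
      fin_cases i <;> simp
      · exact hasDerivAt_const s 0
      · exact hasDerivAt_const s 1
      · exact hud2 s hs
    exact h.deriv
  have key : ∀ s ∈ I, ∀ t : ℝ,
      (SolitonEqAt X ![v₁, v₂, v₃] s t ↔
        deriv (deriv u) s = ((deriv u s) ^ 2 - 1) * (v₂ * deriv u s - v₃)) := by
    intro s hs t
    have habs : |disc X s t| = (deriv u s) ^ 2 - 1 := by
      have hdisc : disc X s t = 1 - (deriv u s) ^ 2 := by
        unfold disc coefE coefF coefG
        rw [hpS t s hs, hpT s t]
        simp [mink]
        ring
      rw [hdisc, abs_of_neg (htl s hs)]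
      ring
    unfold SolitonEqAt coefE coefF coefG
    rw [hpS t s hs, hpT s t, hpTT s t, hpST s t, hpSS t s hs, habs]
    simp [mink, det3]
    constructor <;> intro h <;> nlinarith [h]
  constructor
  · intro h s hs
    exact (key s hs 0).mp (h s hs 0)
  · intro h s hs t
    exact (key s hs t).mpr (h s hs)
end
end

section
/- Let I ⊆ ℝ be an open interval, u : I → ℝ a C² function, and v = (v₁,v₂,v₃) ∈ ℝ³. Define X(s,t) = (s, u(s), t) (a cylindrical surface with rulings parallel to the timelike vector (0,0,1)). Then EG − F² = −(1 + u'(s)²) < 0 at every point (so the surface is timelike and non-degenerate), and X satisfies the translating soliton equation with respect to v at every point of I × ℝ if and only if u''(s) = (1 + u'(s)²)(v₂ − v₁ u'(s)) for all s ∈ I. -/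
noncomputable section

lemma pT_cyl (u : ℝ → ℝ) (s t : ℝ) :
    pT (fun s t => ![s, u s, t]) s t = ![0, 0, 1] := by
  unfold pT
  have h : HasDerivAt (fun b : ℝ => (![s, u s, b] : Fin 3 → ℝ)) ![0, 0, 1] t := by
    rw [hasDerivAt_pi]
    intro i
    fin_cases i
    · simpa using hasDerivAt_const t s
    · simpa using hasDerivAt_const t (u s)
    · simpa using hasDerivAt_id' t
  exact h.deriv

lemma pS_cyl (u : ℝ → ℝ) {s : ℝ} {d : ℝ} (hd : HasDerivAt u d s) (t : ℝ) :
    pS (fun s t => ![s, u s, t]) s t = ![1, d, 0] := by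
  unfold pS
  have h : HasDerivAt (fun a : ℝ => (![a, u a, t] : Fin 3 → ℝ)) ![1, d, 0] s := by
    rw [hasDerivAt_pi]
    intro i
    fin_cases i
    · simpa using hasDerivAt_id' s
    · simpa using hd
    · simpa using hasDerivAt_const s t
  exact h.deriv

lemma pTT_cyl (u : ℝ → ℝ) (s t : ℝ) :
    pTT (fun s t => ![s, u s, t]) s t = 0 := by
  unfold pTT
  have : (fun b => pT (fun s t => ![s, u s, t]) s b) = fun _ => (![0, 0, 1] : Fin 3 → ℝ) := by
    funext b; exact pT_cyl u s b
  rw [this, deriv_const]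

lemma pST_cyl (u : ℝ → ℝ) (s t : ℝ) :
    pST (fun s t => ![s, u s, t]) s t = 0 := by
  unfold pST
  have : (fun a => pT (fun s t => ![s, u s, t]) a t) = fun _ => (![0, 0, 1] : Fin 3 → ℝ) := by
    funext a; exact pT_cyl u a t
  rw [this, deriv_const]

/-- For the cylindrical surface `X(s,t) = (s, u(s), t)` with timelike rulings
`(0,0,1)` over an open interval `I`: `EG − F² = −(1 + u'²) < 0` everywhere, and the
translating soliton equation w.r.t. `v = (v₁,v₂,v₃)` holds on `I × ℝ` iff
`u'' = (1 + u'²)(v₂ − v₁u')` on `I`. -/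
theorem stmt2 (I : Set ℝ) (hIopen : IsOpen I) (hIconn : I.OrdConnected)
    (u : ℝ → ℝ) (hu : ContDiffOn ℝ 2 u I)
    (v₁ v₂ v₃ : ℝ) :
    (∀ s ∈ I, ∀ t : ℝ,
        disc (fun s t => ![s, u s, t]) s t = -(1 + (deriv u s) ^ 2) ∧
        disc (fun s t => ![s, u s, t]) s t < 0) ∧
    ((∀ s ∈ I, ∀ t : ℝ,
        SolitonEqAt (fun s t => ![s, u s, t]) ![v₁, v₂, v₃] s t) ↔
      (∀ s ∈ I,
        deriv (deriv u) s = (1 + (deriv u s) ^ 2) * (v₂ - v₁ * deriv u s))) := by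
  -- differentiability facts
  have hdiff : ∀ s ∈ I, HasDerivAt u (deriv u s) s := by
    intro s hs
    exact (((hu.differentiableOn (by norm_num)).differentiableAt
      (hIopen.mem_nhds hs))).hasDerivAt
  have hud : ContDiffOn ℝ 1 (deriv u) I := by
    exact hu.deriv_of_isOpen (m := 1) hIopen (by norm_num)
  have hdiff2 : ∀ s ∈ I, HasDerivAt (deriv u) (deriv (deriv u) s) s := by
    intro s hs
    exact ((hud.differentiableOn (by norm_num)).differentiableAt
      (hIopen.mem_nhds hs)).hasDerivAt
  -- pSS
  have hpSS : ∀ s ∈ I, ∀ t : ℝ,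
      pSS (fun s t => ![s, u s, t]) s t = ![0, deriv (deriv u) s, 0] := by
    intro s hs t
    unfold pSS
    have hev : (fun a => pS (fun s t => ![s, u s, t]) a t)
        =ᶠ[nhds s] (fun a => (![1, deriv u a, 0] : Fin 3 → ℝ)) := by
      filter_upwards [hIopen.mem_nhds hs] with a ha
      exact pS_cyl u (hdiff a ha) t
    rw [hev.deriv_eq]
    have h : HasDerivAt (fun a : ℝ => (![1, deriv u a, 0] : Fin 3 → ℝ))
        ![0, deriv (deriv u) s, 0] s := by
      rw [hasDerivAt_pi]
      intro i
      fin_cases i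
      · simpa using hasDerivAt_const s (1 : ℝ)
      · simpa using hdiff2 s hs
      · simpa using hasDerivAt_const s (0 : ℝ)
    exact h.deriv
  have hdisc : ∀ s ∈ I, ∀ t : ℝ,
      disc (fun s t => ![s, u s, t]) s t = -(1 + (deriv u s) ^ 2) := by
    intro s hs t
    unfold disc coefE coefF coefG
    rw [pS_cyl u (hdiff s hs) t, pT_cyl u s t]
    simp [mink, Matrix.cons_val_zero, Matrix.cons_val_one]
    ring
  have hpos : ∀ s : ℝ, (0:ℝ) < 1 + (deriv u s) ^ 2 := fun s => by positivity
  constructor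
  · intro s hs t
    refine ⟨hdisc s hs t, ?_⟩
    rw [hdisc s hs t]
    linarith [hpos s]
  · have key : ∀ s ∈ I, ∀ t : ℝ,
        (SolitonEqAt (fun s t => ![s, u s, t]) ![v₁, v₂, v₃] s t ↔
          deriv (deriv u) s = (1 + (deriv u s) ^ 2) * (v₂ - v₁ * deriv u s)) := by
      intro s hs t
      have habs : |disc (fun s t => ![s, u s, t]) s t| = 1 + (deriv u s) ^ 2 := by
        rw [hdisc s hs t, abs_of_neg (by linarith [hpos s])]
        ring
      unfold SolitonEqAt coefE coefF coefG
      rw [pS_cyl u (hdiff s hs) t, pT_cyl u s t, pTT_cyl u s t, pST_cyl u s t,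
        hpSS s hs t, habs]
      simp only [mink, det3, Matrix.cons_val_zero, Matrix.cons_val_one, Matrix.head_cons,
        Matrix.cons_val_two, Matrix.tail_cons, Pi.zero_apply]
      constructor
      · intro h; nlinarith [h, hpos s]
      · intro h; nlinarith [h, hpos s]
    constructor
    · intro h s hs
      exact (key s hs 0).1 (h s hs 0)
    · intro h s hs t
      exact (key s hs t).2 (h s hs)
end
end

section
/- Let I ⊆ ℝ be an open interval, u : I → ℝ a C² function with u'(s) ≠ 0 for all s ∈ I, and v = (v₁,v₂,v₃) ∈ ℝ³. Define X(s,t) = (u(s) + t, s, −u(s) + t) (a cylindrical surface with rulings parallel to the lightlike vector (1,0,1)). Then EG − F² = −4u'(s)² < 0 at every point (non-degenerate), and X satisfies the translating soliton equation with respect to v at every point of I × ℝ if and only if 2v₂ u'(s) − v₁ + v₃ = 0 for all s ∈ I. In particular, if v₂ = 0 and v₁ = v₃ (i.e., v is parallel to the ruling direction (1,0,1)), then the equation holds for every such function u. -/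
noncomputable section

lemma aux_pT (u : ℝ → ℝ) (s t : ℝ) :
    pT (fun s t => ![u s + t, s, -u s + t]) s t = ![1, 0, 1] := by
  have h : HasDerivAt (fun b => (![u s + b, s, -u s + b] : Fin 3 → ℝ)) ![1, 0, 1] t := by
    rw [hasDerivAt_pi]
    intro i
    fin_cases i
    · simpa using (hasDerivAt_id t).const_add (u s)
    · simpa using hasDerivAt_const t s
    · simpa using (hasDerivAt_id t).const_add (-u s)
  exact h.deriv

lemma aux_pS (u : ℝ → ℝ) (s t : ℝ) (hd : HasDerivAt u (deriv u s) s) :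
    pS (fun s t => ![u s + t, s, -u s + t]) s t = ![deriv u s, 1, -deriv u s] := by
  have h : HasDerivAt (fun a => (![u a + t, a, -u a + t] : Fin 3 → ℝ))
      ![deriv u s, 1, -deriv u s] s := by
    rw [hasDerivAt_pi]
    intro i
    fin_cases i
    · simpa using hd.add_const t
    · simpa using hasDerivAt_id' s
    · simpa using hd.neg.add_const t
  exact h.deriv

lemma aux_pST (u : ℝ → ℝ) (s t : ℝ) :
    pST (fun s t => ![u s + t, s, -u s + t]) s t = 0 := by
  unfold pST
  have : (fun a => pT (fun s t => ![u s + t, s, -u s + t]) a t)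
      = fun _ => (![1, 0, 1] : Fin 3 → ℝ) := funext fun a => aux_pT u a t
  rw [this, deriv_const]

lemma aux_pTT (u : ℝ → ℝ) (s t : ℝ) :
    pTT (fun s t => ![u s + t, s, -u s + t]) s t = 0 := by
  unfold pTT
  have : (fun b => pT (fun s t => ![u s + t, s, -u s + t]) s b)
      = fun _ => (![1, 0, 1] : Fin 3 → ℝ) := funext fun b => aux_pT u s b
  rw [this, deriv_const]

lemma aux_disc (u : ℝ → ℝ) (s t : ℝ) (hd : HasDerivAt u (deriv u s) s) :
    disc (fun s t => ![u s + t, s, -u s + t]) s t = -(4 * (deriv u s) ^ 2) := by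
  unfold disc coefE coefF coefG mink
  rw [aux_pS u s t hd, aux_pT u s t]
  simp [Matrix.cons_val_zero, Matrix.cons_val_one, Matrix.head_cons]
  ring

lemma aux_sol (u : ℝ → ℝ) (s t : ℝ) (hd : HasDerivAt u (deriv u s) s) :
    SolitonEqAt (fun s t => ![u s + t, s, -u s + t]) ![v₁, v₂, v₃] s t ↔
      4 * (deriv u s) ^ 2 * (2 * v₂ * deriv u s - v₁ + v₃) = 0 := by
  unfold SolitonEqAt
  rw [aux_pST u s t, aux_pTT u s t, aux_disc u s t hd, aux_pS u s t hd, aux_pT u s t]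
  have habs : |-(4 * (deriv u s) ^ 2)| = 4 * (deriv u s) ^ 2 := by
    rw [abs_neg, abs_of_nonneg]; positivity
  rw [habs]
  unfold coefG mink
  rw [aux_pT u s t]
  simp only [det3, Matrix.cons_val_zero, Matrix.cons_val_one, Matrix.head_cons,
    Matrix.cons_val_two, Matrix.tail_cons, Pi.zero_apply]
  constructor <;> intro h <;> nlinarith [h]

/-- For the cylindrical surface `X(s,t) = (u(s)+t, s, −u(s)+t)` with lightlike
rulings `(1,0,1)` over an open interval `I`, with `u' ≠ 0` on `I`:
`EG − F² = −4u'² < 0` everywhere, and the translating soliton equation w.r.t.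
`v = (v₁,v₂,v₃)` holds on `I × ℝ` iff `2v₂u' − v₁ + v₃ = 0` on `I`. In particular,
if `v₂ = 0` and `v₁ = v₃` the equation holds for every such `u`. -/
theorem stmt3 (I : Set ℝ) (hIopen : IsOpen I) (hIconn : I.OrdConnected)
    (u : ℝ → ℝ) (hu : ContDiffOn ℝ 2 u I)
    (hu' : ∀ s ∈ I, deriv u s ≠ 0)
    (v₁ v₂ v₃ : ℝ) :
    (∀ s ∈ I, ∀ t : ℝ,
        disc (fun s t => ![u s + t, s, -u s + t]) s t = -(4 * (deriv u s) ^ 2) ∧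
        disc (fun s t => ![u s + t, s, -u s + t]) s t < 0) ∧
    ((∀ s ∈ I, ∀ t : ℝ,
        SolitonEqAt (fun s t => ![u s + t, s, -u s + t]) ![v₁, v₂, v₃] s t) ↔
      (∀ s ∈ I, 2 * v₂ * deriv u s - v₁ + v₃ = 0)) ∧
    (v₂ = 0 → v₁ = v₃ →
      ∀ s ∈ I, ∀ t : ℝ,
        SolitonEqAt (fun s t => ![u s + t, s, -u s + t]) ![v₁, v₂, v₃] s t) := by
  have hderiv : ∀ s ∈ I, HasDerivAt u (deriv u s) s := by
    intro s hs
    have : DifferentiableAt ℝ u s :=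
      ((hu.differentiableOn two_ne_zero) s hs).differentiableAt (hIopen.mem_nhds hs)
    exact this.hasDerivAt
  refine ⟨?_, ?_, ?_⟩
  · intro s hs t
    have h1 := aux_disc u s t (hderiv s hs)
    refine ⟨h1, ?_⟩
    rw [h1]
    have := hu' s hs
    nlinarith [sq_pos_of_ne_zero this]
  · constructor
    · intro h s hs
      have := (aux_sol (v₁ := v₁) (v₂ := v₂) (v₃ := v₃) u s 0 (hderiv s hs)).mp (h s hs 0)
      have h2 := sq_pos_of_ne_zero (hu' s hs)
      nlinarith [this]
    · intro h s hs t
      rw [aux_sol u s t (hderiv s hs), h s hs]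
      ring
  · intro h1 h2 s hs t
    rw [aux_sol u s t (hderiv s hs)]
    rw [h1, h2]
    ring
end
end

section
/- Let I ⊆ ℝ be an open interval, γ : I → ℝ³ a C² curve with ⟨γ'(s),(1,0,1)⟩ ≠ 0 for all s ∈ I, and λ ∈ ℝ. Then the cylindrical surface X(s,t) = γ(s) + t(1,0,1), whose rulings are parallel to the lightlike vector (1,0,1), is non-degenerate at every point of I × ℝ (indeed EG − F² = −⟨γ'(s),(1,0,1)⟩² < 0) and satisfies the translating soliton equation with respect to v = λ(1,0,1) at every point of I × ℝ. That is, when the velocity v is lightlike, any cylindrical surface whose rulings are parallel to v is a translating soliton, with arbitrary base curve. -/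
noncomputable section

/-- For a C² base curve `γ` on an open interval `I` with
`⟨γ'(s),(1,0,1)⟩ ≠ 0`, the cylindrical surface `X(s,t) = γ(s) + t(1,0,1)` with lightlike
rulings `(1,0,1)` is non-degenerate, with `EG − F² = −⟨γ',(1,0,1)⟩² < 0`, and is a
translating soliton with respect to any lightlike velocity `v = λ(1,0,1)`. -/
theorem stmt4 (I : Set ℝ) (hIopen : IsOpen I) (hIconn : I.OrdConnected)
    (γ : ℝ → Fin 3 → ℝ) (hγ : ContDiffOn ℝ 2 γ I)
    (hne : ∀ s ∈ I, mink (deriv γ s) ![1, 0, 1] ≠ 0)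
    (l : ℝ) :
    ∀ s ∈ I, ∀ t : ℝ,
      disc (fun s t => γ s + t • ![1, 0, 1]) s t
          = -(mink (deriv γ s) ![1, 0, 1]) ^ 2 ∧
      disc (fun s t => γ s + t • ![1, 0, 1]) s t < 0 ∧
      SolitonEqAt (fun s t => γ s + t • ![1, 0, 1]) (l • ![1, 0, 1]) s t := by
  intro s hs t
  set w : Fin 3 → ℝ := ![1, 0, 1] with hw
  have hpS : ∀ a b : ℝ, pS (fun s t => γ s + t • w) a b = deriv γ a := by
    intro a b
    simp only [pS]
    exact deriv_add_const _
  have hpT : ∀ a b : ℝ, pT (fun s t => γ s + t • w) a b = w := by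
    intro a b
    simp only [pT]
    rw [deriv_const_add]
    rw [deriv_smul_const differentiableAt_fun_id]
    simp
  have hpTT : pTT (fun s t => γ s + t • w) s t = 0 := by
    have : (fun b => pT (fun s t => γ s + t • w) s b) = fun _ => w := by
      funext b; exact hpT s b
    simp [pTT, this]
  have hpST : pST (fun s t => γ s + t • w) s t = 0 := by
    have : (fun a => pT (fun s t => γ s + t • w) a t) = fun _ => w := by
      funext a; exact hpT a t
    simp [pST, this]
  have hG : coefG (fun s t => γ s + t • w) s t = 0 := by
    rw [coefG, hpT]; simp [mink, hw]
  have hF : coefF (fun s t => γ s + t • w) s t = mink (deriv γ s) w := by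
    rw [coefF, hpS, hpT]
  have hdisc : disc (fun s t => γ s + t • w) s t = -(mink (deriv γ s) w) ^ 2 := by
    simp [disc, hG, hF]
  refine ⟨hdisc, ?_, ?_⟩
  · rw [hdisc, neg_lt_zero]
    have h := hne s hs
    positivity
  · unfold SolitonEqAt
    rw [hpTT, hpST, hG, hpS, hpT]
    have h1 : det3 (deriv γ s) w 0 = 0 := by simp [det3]
    have h2 : det3 (deriv γ s) w (l • w) = 0 := by
      simp [det3, hw, Matrix.smul_cons]
    rw [h1, h2]
    ring
end
end

section
/- For any a, b, v₁ ∈ ℝ, let u(s) = log(sinh(s + a)) + b for s > −a. Then 1 − u'(s)² < 0 for all such s, and the cylindrical surface X(s,t) = (t, s, u(s)) satisfies the translating soliton equation with respect to v = (v₁, 0, 1) at every point (s,t) with s > −a (a Lorentzian grim reaper with spacelike rulings; equivalently, u solves u'' = 1 − u'²). -/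
noncomputable section

/-- The Lorentzian grim reaper `u(s) = log sinh(s+a) + b`, for `s > −a`,
satisfies `1 − u'² < 0` and `u'' = 1 − u'²`, and the cylindrical surface
`X(s,t) = (t, s, u(s))` is a translating soliton with respect to `v = (v₁,0,1)` at every
point `(s,t)` with `s > −a`. -/
theorem stmt6 (a b v₁ : ℝ) (u : ℝ → ℝ)
    (hu : u = fun s => Real.log (Real.sinh (s + a)) + b) :
    (∀ s : ℝ, -a < s → 1 - (deriv u s) ^ 2 < 0) ∧
    (∀ s : ℝ, -a < s → deriv (deriv u) s = 1 - (deriv u s) ^ 2) ∧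
    (∀ s t : ℝ, -a < s → SolitonEqAt (fun s t => ![t, s, u s]) ![v₁, 0, 1] s t) := by
  subst hu
  set u : ℝ → ℝ := fun s => Real.log (Real.sinh (s + a)) + b with hu
  set c : ℝ → ℝ := fun s => Real.cosh (s + a) / Real.sinh (s + a) with hc
  have hsinh : ∀ s : ℝ, -a < s → 0 < Real.sinh (s + a) := by
    intro s hs
    exact Real.sinh_pos_iff.2 (by linarith)
  have hshift : ∀ s : ℝ, HasDerivAt (fun x : ℝ => x + a) 1 s := fun s =>
    (hasDerivAt_id s).add_const a
  have hdsinh : ∀ s : ℝ, HasDerivAt (fun x => Real.sinh (x + a)) (Real.cosh (s + a)) s := by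
    intro s
    simpa [Function.comp_def] using (Real.hasDerivAt_sinh (s + a)).comp s (hshift s)
  have hdcosh : ∀ s : ℝ, HasDerivAt (fun x => Real.cosh (x + a)) (Real.sinh (s + a)) s := by
    intro s
    simpa [Function.comp_def] using (Real.hasDerivAt_cosh (s + a)).comp s (hshift s)
  have hd : ∀ s : ℝ, -a < s → HasDerivAt u (c s) s := by
    intro s hs
    exact ((hdsinh s).log (ne_of_gt (hsinh s hs))).add_const b
  have hderiv : ∀ s : ℝ, -a < s → deriv u s = c s := fun s hs => (hd s hs).deriv
  have hneg : ∀ s : ℝ, -a < s → 1 - c s ^ 2 < 0 := by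
    intro s hs
    have h1 := hsinh s hs
    have h2 : Real.cosh (s + a) ^ 2 = Real.sinh (s + a) ^ 2 + 1 := Real.cosh_sq (s + a)
    have : c s ^ 2 = (Real.sinh (s + a) ^ 2 + 1) / Real.sinh (s + a) ^ 2 := by
      simp only [hc]
      rw [div_pow, h2]
    rw [this]
    have h3 : 0 < Real.sinh (s + a) ^ 2 := by positivity
    rw [sub_neg, lt_div_iff₀ h3]
    linarith
  have hdc : ∀ s : ℝ, -a < s → HasDerivAt c (1 - c s ^ 2) s := by
    intro s hs
    have h1 := hsinh s hs
    have h : HasDerivAt c ((Real.sinh (s + a) * Real.sinh (s + a) - Real.cosh (s + a) * Real.cosh (s + a)) / Real.sinh (s + a) ^ 2) s := (hdcosh s).div (hdsinh s) (ne_of_gt h1)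
    convert h using 1
    have h2 : Real.cosh (s + a) ^ 2 = Real.sinh (s + a) ^ 2 + 1 := Real.cosh_sq (s + a)
    simp only [hc]
    field_simp
  have hev : ∀ s : ℝ, -a < s → (∀ᶠ x in nhds s, -a < x) := by
    intro s hs
    exact eventually_gt_nhds hs
  refine ⟨?_, ?_, ?_⟩
  · intro s hs
    rw [hderiv s hs]
    exact hneg s hs
  · intro s hs
    have heq : deriv u =ᶠ[nhds s] c := by
      filter_upwards [hev s hs] with x hx using hderiv x hx
    rw [heq.deriv_eq, (hdc s hs).deriv, hderiv s hs]
  · intro s t hs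
    set X : ℝ → ℝ → Fin 3 → ℝ := fun s t => ![t, s, u s] with hX
    have hpT : ∀ s' t' : ℝ, pT X s' t' = ![1, 0, 0] := by
      intro s' t'
      have : HasDerivAt (fun b' => X s' b') ![1, 0, 0] t' := by
        rw [hasDerivAt_pi]
        intro i
        fin_cases i <;> simp [hX] <;>
          first
            | exact hasDerivAt_id t'
            | exact hasDerivAt_const t' _
      exact this.deriv
    have hpS : ∀ s' t' : ℝ, -a < s' → pS X s' t' = ![0, 1, c s'] := by
      intro s' t' hs'
      have : HasDerivAt (fun x => X x t') ![0, 1, c s'] s' := by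
        rw [hasDerivAt_pi]
        intro i
        fin_cases i <;> simp [hX]
        · exact hasDerivAt_const s' _
        · exact hasDerivAt_id s'
        · exact hd s' hs'
      exact this.deriv
    have hpST : pST X s t = 0 := by
      have : (fun a' => pT X a' t) = fun _ => ![1, 0, 0] := funext fun a' => hpT a' t
      rw [pST, this, deriv_const]
    have hpTT : pTT X s t = 0 := by
      have : (fun b' => pT X s b') = fun _ => ![1, 0, 0] := funext fun b' => hpT s b'
      rw [pTT, this, deriv_const]
    have hpSS : pSS X s t = ![0, 0, 1 - c s ^ 2] := by
      have heq : (fun x => pS X x t) =ᶠ[nhds s] fun x => ![0, 1, c x] := by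
        filter_upwards [hev s hs] with x hx using hpS x t hx
      have hdd : HasDerivAt (fun x => (![0, 1, c x] : Fin 3 → ℝ)) ![0, 0, 1 - c s ^ 2] s := by
        rw [hasDerivAt_pi]
        intro i
        fin_cases i <;> simp
        · exact hasDerivAt_const s _
        · exact hasDerivAt_const s _
        · exact hdc s hs
      rw [pSS, heq.deriv_eq, hdd.deriv]
    have hE : coefE X s t = 1 - c s ^ 2 := by
      rw [coefE, hpS s t hs]; simp [mink]; ring
    have hF : coefF X s t = 0 := by
      rw [coefF, hpS s t hs, hpT]; simp [mink]
    have hG : coefG X s t = 1 := by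
      rw [coefG, hpT]; simp [mink]
    have hdisc : disc X s t = 1 - c s ^ 2 := by
      rw [disc, hE, hF, hG]; ring
    have habs : |disc X s t| = c s ^ 2 - 1 := by
      rw [hdisc, abs_of_neg (hneg s hs)]; ring
    show SolitonEqAt X ![v₁, 0, 1] s t
    rw [SolitonEqAt, hE, hF, hG, habs, hpS s t hs, hpT, hpST, hpTT, hpSS]
    simp [det3]
end
end

section
/- For any a > 0 and b, v₁ ∈ ℝ, let u(s) = log(e^s + √(e^{2s} + a)) + b for s ∈ ℝ. Then 1 − u'(s)² = a/(e^{2s} + a) > 0 for all s, and the cylindrical surface X(s,t) = (t, s, u(s)) satisfies the translating soliton equation with respect to v = (v₁, 1, 0) at every point of ℝ² (equivalently, u solves u'' = (1 − u'²)u'). -/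
noncomputable section

lemma vecDeriv {g0 g1 g2 : ℝ → ℝ} {d0 d1 d2 : ℝ} {s : ℝ}
    (h0 : HasDerivAt g0 d0 s) (h1 : HasDerivAt g1 d1 s) (h2 : HasDerivAt g2 d2 s) :
    HasDerivAt (fun a => ![g0 a, g1 a, g2 a]) ![d0, d1, d2] s := by
  apply hasDerivAt_pi.mpr
  intro i
  fin_cases i
  · simpa using h0
  · simpa using h1
  · simpa using h2

/-- For `a > 0`, the function `u(s) = log(eˢ + √(e²ˢ + a)) + b` satisfies
`1 − u'² = a/(e²ˢ + a) > 0` and `u'' = (1 − u'²)u'` everywhere, and the cylindrical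
surface `X(s,t) = (t, s, u(s))` is a translating soliton with respect to `v = (v₁,1,0)`. -/
theorem stmt7 (a b v₁ : ℝ) (ha : 0 < a) (u : ℝ → ℝ)
    (hu : u = fun s => Real.log (Real.exp s + Real.sqrt (Real.exp (2 * s) + a)) + b) :
    (∀ s : ℝ, 1 - (deriv u s) ^ 2 = a / (Real.exp (2 * s) + a)) ∧
    (∀ s : ℝ, 1 - (deriv u s) ^ 2 > 0) ∧
    (∀ s : ℝ, deriv (deriv u) s = (1 - (deriv u s) ^ 2) * deriv u s) ∧
    (∀ s t : ℝ, SolitonEqAt (fun s t => ![t, s, u s]) ![v₁, 1, 0] s t) := by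
  
  have hwpos : ∀ s : ℝ, 0 < Real.exp (2 * s) + a := fun s => by positivity
  set w : ℝ → ℝ := fun s => Real.sqrt (Real.exp (2 * s) + a) with hw
  have hwpos' : ∀ s, 0 < w s := fun s => Real.sqrt_pos.mpr (hwpos s)
  have hwsq : ∀ s, w s ^ 2 = Real.exp (2 * s) + a := fun s => Real.sq_sqrt (hwpos s).le
  have he2 : ∀ s : ℝ, Real.exp (2 * s) = Real.exp s * Real.exp s := by
    intro s; rw [two_mul, Real.exp_add]
  have hwd : ∀ s, HasDerivAt w (Real.exp (2 * s) / w s) s := by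
    intro s
    have h1 : HasDerivAt (fun s => Real.exp (2 * s) + a) (2 * Real.exp (2 * s)) s := by
      have := (Real.hasDerivAt_exp (2 * s)).comp s ((hasDerivAt_id s).const_mul 2)
      simpa [mul_comm] using this.add_const a
    have h2 := h1.sqrt (ne_of_gt (hwpos s))
    convert h2 using 1
    have := (hwpos' s).ne'
    rw [eq_div_iff (by positivity)]
    field_simp
    ring
  set f : ℝ → ℝ := fun s => Real.exp s / w s with hf
  have hud : ∀ s, HasDerivAt u (f s) s := by
    intro s
    have hin : HasDerivAt (fun s => Real.exp s + w s) (Real.exp s + Real.exp (2 * s) / w s) s :=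
      (Real.hasDerivAt_exp s).add (hwd s)
    have hpos : 0 < Real.exp s + w s := by
      have := hwpos' s; have := Real.exp_pos s; linarith
    have h := (hin.log (ne_of_gt hpos)).add_const b
    rw [hu]
    refine HasDerivAt.congr_deriv h ?_
    rw [hf]
    have hw0 := (hwpos' s).ne'
    rw [he2 s]
    field_simp
    ring
  have hdu : deriv u = f := funext fun s => (hud s).deriv
  have hfsq : ∀ s, 1 - f s ^ 2 = a / (Real.exp (2 * s) + a) := by
    intro s
    have hw0 := (hwpos' s).ne'
    have : f s ^ 2 = Real.exp (2 * s) / (Real.exp (2 * s) + a) := by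
      rw [hf, div_pow, hwsq s, he2 s]; ring
    rw [this]
    field_simp
    ring
  have hfd : ∀ s, HasDerivAt f ((1 - f s ^ 2) * f s) s := by
    intro s
    have hw0 := (hwpos' s).ne'
    have h := (Real.hasDerivAt_exp s).div (hwd s) hw0
    refine HasDerivAt.congr_deriv h ?_
    rw [hf]
    have hq := hwsq s
    field_simp
    linear_combination (-1 : ℝ) * he2 s
  have hddu : ∀ s, deriv (deriv u) s = (1 - deriv u s ^ 2) * deriv u s := by
    intro s
    rw [hdu]
    exact (hfd s).deriv
  refine ⟨fun s => by rw [hdu]; exact hfsq s,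
    fun s => by rw [hdu, hfsq s]; exact div_pos ha (hwpos s),
    hddu, ?_⟩
  intro s t
  set X : ℝ → ℝ → Fin 3 → ℝ := fun s t => ![t, s, u s] with hX
  have hps : ∀ s, pS X s t = ![0, 1, f s] := by
    intro s
    exact (vecDeriv (hasDerivAt_const s t) (hasDerivAt_id s) (hud s)).deriv
  have hpt : ∀ s t, pT X s t = ![1, 0, 0] := by
    intro s t
    exact (vecDeriv (hasDerivAt_id t) (hasDerivAt_const t s) (hasDerivAt_const t (u s))).deriv
  have hpss : pSS X s t = ![0, 0, (1 - f s ^ 2) * f s] := by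
    have : (fun a => pS X a t) = fun a => ![(0:ℝ), 1, f a] := funext fun a => hps a
    rw [pSS, this]
    exact (vecDeriv (hasDerivAt_const s (0:ℝ)) (hasDerivAt_const s (1:ℝ)) (hfd s)).deriv
  have hpst : pST X s t = ![0, 0, 0] := by
    have : (fun a => pT X a t) = fun _ => ![(1:ℝ), 0, 0] := funext fun a => hpt a t
    rw [pST, this]
    exact (vecDeriv (hasDerivAt_const s (1:ℝ)) (hasDerivAt_const s (0:ℝ))
      (hasDerivAt_const s (0:ℝ))).deriv
  have hptt : pTT X s t = ![0, 0, 0] := by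
    have : (fun b => pT X s b) = fun _ => ![(1:ℝ), 0, 0] := funext fun b => hpt s b
    rw [pTT, this]
    exact (vecDeriv (hasDerivAt_const t (1:ℝ)) (hasDerivAt_const t (0:ℝ))
      (hasDerivAt_const t (0:ℝ))).deriv
  have hdiscpos : 0 < 1 - f s ^ 2 := by
    rw [hfsq s]; exact div_pos ha (hwpos s)
  unfold SolitonEqAt disc coefE coefF coefG
  rw [hps s, hpt s t, hpss, hpst, hptt]
  unfold mink det3
  simp only [Matrix.cons_val_zero, Matrix.cons_val_one, Matrix.head_cons,
    Matrix.cons_val_two, Matrix.tail_cons]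
  have habs : |(0 * 0 + 1 * 1 - f s * f s) * (1 * 1 + 0 * 0 - 0 * 0) -
      (0 * 1 + 1 * 0 - f s * 0) ^ 2| = 1 - f s ^ 2 := by
    rw [abs_of_pos (by nlinarith)]
    ring
  rw [habs]
  ring
end
end

section
/- For any a > 0 and b, v₁ ∈ ℝ, let u(s) = arctanh(√(1 − a e^{2s})) + b for s < −(log a)/2 (so that 0 < a e^{2s} < 1). Then 1 − u'(s)² < 0 for all such s, and the cylindrical surface X(s,t) = (t, s, u(s)) satisfies the translating soliton equation with respect to v = (v₁, 1, 0) at every point (s,t) with s < −(log a)/2 (equivalently, u solves u'' = (u'² − 1)u'). -/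
noncomputable section

/-- The inverse hyperbolic tangent, `arctanh x = (1/2)·log((1+x)/(1−x))`. -/
def arctanh (x : ℝ) : ℝ := (1 / 2) * Real.log ((1 + x) / (1 - x))

namespace Stmt8Aux

open Real Filter

lemma wlt {a : ℝ} (ha : 0 < a) {s : ℝ} (hs : s < -(Real.log a) / 2) :
    a * Real.exp (2 * s) < 1 := by
  have h1 : Real.exp (2 * s) < Real.exp (-Real.log a) := by
    apply Real.exp_lt_exp.2; linarith
  rw [Real.exp_neg, Real.exp_log ha] at h1
  have := mul_lt_mul_of_pos_left h1 ha
  rwa [mul_inv_cancel₀ ha.ne'] at this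

lemma hopen (a : ℝ) : IsOpen {s : ℝ | a * Real.exp (2 * s) < 1} := by
  apply isOpen_lt _ continuous_const
  exact continuous_const.mul (Real.continuous_exp.comp (continuous_const.mul continuous_id))

/-- derivative of the inner sqrt -/
lemma hg {a : ℝ} (ha : 0 < a) {s : ℝ} (hs : a * Real.exp (2 * s) < 1) :
    HasDerivAt (fun s => Real.sqrt (1 - a * Real.exp (2 * s)))
      (1 / (2 * Real.sqrt (1 - a * Real.exp (2 * s))) * (-(a * (Real.exp (2 * s) * 2)))) s := by
  have hpos : 0 < 1 - a * Real.exp (2 * s) := by linarith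
  have h1 : HasDerivAt (fun s : ℝ => 1 - a * Real.exp (2 * s))
      (-(a * (Real.exp (2 * s) * 2))) s := by
    have he : HasDerivAt (fun s : ℝ => Real.exp (2 * s)) (Real.exp (2 * s) * 2) s := by
      have h2 : HasDerivAt (fun s : ℝ => 2 * s) 2 s := by
        simpa using (hasDerivAt_id s).const_mul (2:ℝ)
      exact (Real.hasDerivAt_exp (2 * s)).comp s h2
    exact ((hasDerivAt_const s (1:ℝ)).sub (he.const_mul a)).congr_deriv (by ring)
  exact (Real.hasDerivAt_sqrt hpos.ne').comp s h1

lemma hderiv {a : ℝ} (bb : ℝ) (ha : 0 < a) {s : ℝ} (hs : a * Real.exp (2 * s) < 1) :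
    HasDerivAt (fun s => arctanh (Real.sqrt (1 - a * Real.exp (2 * s))) + bb)
      (-1 / Real.sqrt (1 - a * Real.exp (2 * s))) s := by
  set w := a * Real.exp (2 * s) with hw
  have hw0 : 0 < w := by positivity
  have hpos : 0 < 1 - w := by linarith
  set x := Real.sqrt (1 - w) with hxdef
  have hx : 0 < x := Real.sqrt_pos.2 hpos
  have hx2 : x ^ 2 = 1 - w := Real.sq_sqrt hpos.le
  have hx1 : x < 1 := by nlinarith
  have hgs := hg ha hs
  have hlog1 : HasDerivAt (fun s => Real.log (1 + Real.sqrt (1 - a * Real.exp (2 * s))))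
      ((1 + x)⁻¹ * (1 / (2 * x) * (-(a * (Real.exp (2 * s) * 2))))) s := by
    have := (Real.hasDerivAt_log (by linarith : (1:ℝ) + x ≠ 0)).comp s
      ((hasDerivAt_const s (1:ℝ)).add hgs)
    exact this.congr_deriv (by rw [zero_add])
  have hlog2 : HasDerivAt (fun s => Real.log (1 - Real.sqrt (1 - a * Real.exp (2 * s))))
      ((1 - x)⁻¹ * (-(1 / (2 * x) * (-(a * (Real.exp (2 * s) * 2)))))) s := by
    have := (Real.hasDerivAt_log (by intro h; nlinarith : (1:ℝ) - x ≠ 0)).comp s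
      ((hasDerivAt_const s (1:ℝ)).sub hgs)
    exact this.congr_deriv (by rw [zero_sub])
  have hmain : HasDerivAt
      (fun s => (1/2) * (Real.log (1 + Real.sqrt (1 - a * Real.exp (2 * s)))
        - Real.log (1 - Real.sqrt (1 - a * Real.exp (2 * s)))) + bb)
      ((1/2) * ((1 + x)⁻¹ * (1 / (2 * x) * (-(a * (Real.exp (2 * s) * 2))))
        - (1 - x)⁻¹ * (-(1 / (2 * x) * (-(a * (Real.exp (2 * s) * 2))))))) s :=
    ((hlog1.sub hlog2).const_mul (1/2)).add_const bb
  have heq : (fun s => arctanh (Real.sqrt (1 - a * Real.exp (2 * s))) + bb)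
      =ᶠ[nhds s] (fun s => (1/2) * (Real.log (1 + Real.sqrt (1 - a * Real.exp (2 * s)))
        - Real.log (1 - Real.sqrt (1 - a * Real.exp (2 * s)))) + bb) := by
    filter_upwards [(hopen a).mem_nhds hs] with s' hs'
    have hpos' : 0 < 1 - a * Real.exp (2 * s') := by
      linarith [show a * Real.exp (2 * s') < 1 from hs']
    set y := Real.sqrt (1 - a * Real.exp (2 * s')) with hy
    have hy0 : 0 < y := Real.sqrt_pos.2 hpos'
    have hy2 : y ^ 2 = 1 - a * Real.exp (2 * s') := Real.sq_sqrt hpos'.le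
    have hw0' : 0 < a * Real.exp (2 * s') := by positivity
    have hy1 : y < 1 := by nlinarith
    rw [arctanh, Real.log_div (by linarith) (by intro h; nlinarith)]
  have := hmain.congr_of_eventuallyEq heq
  refine this.congr_deriv ?_
  have hne : (1:ℝ) + x ≠ 0 := by linarith
  have hne2 : (1:ℝ) - x ≠ 0 := by intro h; nlinarith
  rw [hw] at hx2
  field_simp
  nlinarith [hx2]

/-- derivative of u' = -1/sqrt(1-w) -/
lemma hderiv2 {a : ℝ} (ha : 0 < a) {s : ℝ} (hs : a * Real.exp (2 * s) < 1) :
    HasDerivAt (fun s => -1 / Real.sqrt (1 - a * Real.exp (2 * s)))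
      (((-1 / Real.sqrt (1 - a * Real.exp (2 * s))) ^ 2 - 1)
        * (-1 / Real.sqrt (1 - a * Real.exp (2 * s)))) s := by
  set w := a * Real.exp (2 * s) with hw
  have hw0 : 0 < w := by positivity
  have hpos : 0 < 1 - w := by linarith
  have hx : 0 < Real.sqrt (1 - w) := Real.sqrt_pos.2 hpos
  have hx2 : Real.sqrt (1 - w) ^ 2 = 1 - w := Real.sq_sqrt hpos.le
  have hgs := hg ha hs
  have := (hasDerivAt_const s (-1:ℝ)).div hgs hx.ne'
  refine this.congr_deriv ?_
  rw [← hw] at *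
  set x := Real.sqrt (1 - w)
  field_simp
  linear_combination (-1) * hx2

end Stmt8Aux
/-- For `a > 0`, the function `u(s) = arctanh(√(1 − a·e²ˢ)) + b`, for
`s < −(log a)/2`, satisfies `1 − u'² < 0` and `u'' = (u'² − 1)u'` on that domain, and the
cylindrical surface `X(s,t) = (t, s, u(s))` is a translating soliton with respect to
`v = (v₁,1,0)` at every point `(s,t)` with `s < −(log a)/2`. -/
theorem stmt8 (a b v₁ : ℝ) (ha : 0 < a) (u : ℝ → ℝ)
    (hu : u = fun s => arctanh (Real.sqrt (1 - a * Real.exp (2 * s))) + b) :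
    (∀ s : ℝ, s < -(Real.log a) / 2 → 1 - (deriv u s) ^ 2 < 0) ∧
    (∀ s : ℝ, s < -(Real.log a) / 2 →
        deriv (deriv u) s = ((deriv u s) ^ 2 - 1) * deriv u s) ∧
    (∀ s t : ℝ, s < -(Real.log a) / 2 →
        SolitonEqAt (fun s t => ![t, s, u s]) ![v₁, 1, 0] s t) := by
  have hU : ∀ s : ℝ, a * Real.exp (2 * s) < 1 →
      HasDerivAt u (-1 / Real.sqrt (1 - a * Real.exp (2 * s))) s := by
    intro s hs; rw [hu]; exact Stmt8Aux.hderiv b ha hs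
  have key1 : ∀ s : ℝ, a * Real.exp (2 * s) < 1 →
      deriv u s = -1 / Real.sqrt (1 - a * Real.exp (2 * s)) := fun s hs => (hU s hs).deriv
  have part1 : ∀ s : ℝ, a * Real.exp (2 * s) < 1 → 1 - (deriv u s) ^ 2 < 0 := by
    intro s hs
    rw [key1 s hs]
    have hw0 : 0 < a * Real.exp (2 * s) := by positivity
    have hpos : 0 < 1 - a * Real.exp (2 * s) := by linarith
    set x := Real.sqrt (1 - a * Real.exp (2 * s)) with hx
    have hx0 : 0 < x := Real.sqrt_pos.2 hpos
    have hx2 : x ^ 2 = 1 - a * Real.exp (2 * s) := Real.sq_sqrt hpos.le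
    have hinv : (-1 / x) ^ 2 * x ^ 2 = 1 := by field_simp
    nlinarith
  have part2eq : ∀ s : ℝ, a * Real.exp (2 * s) < 1 →
      HasDerivAt (deriv u) (((deriv u s) ^ 2 - 1) * deriv u s) s := by
    intro s hs
    have hE : deriv u =ᶠ[nhds s] (fun s => -1 / Real.sqrt (1 - a * Real.exp (2 * s))) := by
      filter_upwards [(Stmt8Aux.hopen a).mem_nhds hs] with s' hs'
      exact key1 s' hs'
    have := (Stmt8Aux.hderiv2 ha hs).congr_of_eventuallyEq hE
    rwa [← key1 s hs] at this
  refine ⟨fun s hs => part1 s (Stmt8Aux.wlt ha hs),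
    fun s hs => (part2eq s (Stmt8Aux.wlt ha hs)).deriv, ?_⟩
  intro s t hs'
  have hs : a * Real.exp (2 * s) < 1 := Stmt8Aux.wlt ha hs'
  set X : ℝ → ℝ → Fin 3 → ℝ := fun s t => ![t, s, u s] with hX
  have hpT : ∀ s' t' : ℝ, pT X s' t' = ![1, 0, 0] := by
    intro s' t'
    have : HasDerivAt (fun bb => X s' bb) ![1, 0, 0] t' := by
      apply hasDerivAt_pi.2
      intro i
      fin_cases i
      · simpa [hX] using hasDerivAt_id' t'
      · simpa [hX] using hasDerivAt_const t' s'
      · simpa [hX] using hasDerivAt_const t' (u s')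
    exact this.deriv
  have hpS : ∀ s' : ℝ, a * Real.exp (2 * s') < 1 → ∀ t' : ℝ,
      pS X s' t' = ![0, 1, deriv u s'] := by
    intro s' hs2 t'
    have : HasDerivAt (fun aa => X aa t') ![0, 1, deriv u s'] s' := by
      apply hasDerivAt_pi.2
      intro i
      fin_cases i
      · simpa [hX] using hasDerivAt_const s' t'
      · simpa [hX] using hasDerivAt_id' s'
      · simpa [hX] using (hU s' hs2).congr_deriv (key1 s' hs2).symm
    exact this.deriv
  have hpST : pST X s t = 0 := by
    have : (fun aa => pT X aa t) = fun _ => ![1, 0, 0] := funext fun aa => hpT aa t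
    rw [pST, this, deriv_const]
  have hpTT : pTT X s t = 0 := by
    have : (fun bb => pT X s bb) = fun _ => ![1, 0, 0] := funext fun bb => hpT s bb
    rw [pTT, this, deriv_const]
  have hpSS : pSS X s t = ![0, 0, ((deriv u s) ^ 2 - 1) * deriv u s] := by
    have hE : (fun aa => pS X aa t) =ᶠ[nhds s] (fun aa => ![0, 1, deriv u aa]) := by
      filter_upwards [(Stmt8Aux.hopen a).mem_nhds hs] with s' hs2
      exact hpS s' hs2 t
    rw [pSS, hE.deriv_eq]
    have : HasDerivAt (fun aa => (![0, 1, deriv u aa] : Fin 3 → ℝ))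
        ![0, 0, ((deriv u s) ^ 2 - 1) * deriv u s] s := by
      apply hasDerivAt_pi.2
      intro i
      fin_cases i
      · simpa using hasDerivAt_const s (0:ℝ)
      · simpa using hasDerivAt_const s (1:ℝ)
      · simpa using part2eq s hs
    exact this.deriv
  have hP := part1 s hs
  rw [SolitonEqAt, coefE, coefF, coefG, disc, coefE, coefF, coefG,
    hpS s hs t, hpT s t, hpST, hpTT, hpSS]
  have h2 := (part2eq s hs).deriv
  simp only [mink, det3, Matrix.cons_val_zero, Matrix.cons_val_one, Matrix.head_cons,
    Matrix.cons_val_two, Matrix.tail_cons, Pi.zero_apply]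
  rw [abs_of_neg (by nlinarith :
      (0 * 0 + 1 * 1 - deriv u s * deriv u s) * (1 * 1 + 0 * 0 - 0 * 0)
      - (0 * 1 + 1 * 0 - deriv u s * 0) ^ 2 < 0)]
  ring
end
end

section
/- For any a, b, v₃ ∈ ℝ, let u(s) = −log(cos(s + a)) + b on an interval where cos(s + a) > 0. Then the cylindrical surface X(s,t) = (s, u(s), t), whose rulings are parallel to the timelike vector (0,0,1), is timelike (EG − F² = −(1 + u'²) < 0) and satisfies the translating soliton equation with respect to v = (0, 1, v₃) at every point (s,t) with cos(s + a) > 0 (the Euclidean grim reaper viewed in Minkowski space; equivalently, u solves u'' = 1 + u'²). -/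
noncomputable section

open Real in
private lemma hu_deriv (a b : ℝ) {x : ℝ} (h : 0 < Real.cos (x + a)) :
    HasDerivAt (fun s => -Real.log (Real.cos (s + a)) + b) (Real.tan (x + a)) x := by
  have h1 : HasDerivAt (fun s : ℝ => s + a) 1 x := (hasDerivAt_id x).add_const a
  have h2 : HasDerivAt (fun s : ℝ => Real.cos (s + a)) (-Real.sin (x + a)) x := by
    have := (Real.hasDerivAt_cos (x + a)).comp x h1
    simp only [mul_one] at this
    exact this
  have h3 : HasDerivAt (fun s : ℝ => Real.log (Real.cos (s + a)))
      ((Real.cos (x + a))⁻¹ * (-Real.sin (x + a))) x := by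
    have := (Real.hasDerivAt_log (ne_of_gt h)).comp x h2
    exact this
  have h4 := (h3.neg).add_const b
  have : -((Real.cos (x + a))⁻¹ * (-Real.sin (x + a))) = Real.tan (x + a) := by
    rw [Real.tan_eq_sin_div_cos]; field_simp
  rwa [this] at h4

private lemma htan_deriv (a : ℝ) {x : ℝ} (h : 0 < Real.cos (x + a)) :
    HasDerivAt (fun s => Real.tan (s + a)) (1 + Real.tan (x + a) ^ 2) x := by
  have h1 : HasDerivAt (fun s : ℝ => s + a) 1 x := (hasDerivAt_id x).add_const a
  have h2 : HasDerivAt (fun s : ℝ => Real.tan (s + a)) (1 / Real.cos (x + a) ^ 2 * 1) x := by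
    have := (Real.hasDerivAt_tan (ne_of_gt h)).comp x h1
    exact this
  have : 1 / Real.cos (x + a) ^ 2 * 1 = 1 + Real.tan (x + a) ^ 2 := by
    rw [Real.tan_eq_sin_div_cos]
    field_simp
    exact (Real.cos_sq_add_sin_sq _).symm
  rwa [this] at h2

private lemma hXs (u : ℝ → ℝ) (t : ℝ) {x d : ℝ} (hd : HasDerivAt u d x) :
    HasDerivAt (fun s => (![s, u s, t] : Fin 3 → ℝ)) ![1, d, 0] x := by
  rw [hasDerivAt_pi]
  intro i
  fin_cases i <;> simp
  · exact hasDerivAt_id x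
  · exact hd
  · exact hasDerivAt_const x t

/-- The Euclidean grim reaper `u(s) = −log cos(s+a) + b` (where `cos(s+a) > 0`)
solves `u'' = 1 + u'²`, and the cylindrical surface `X(s,t) = (s, u(s), t)` with timelike
rulings `(0,0,1)` is timelike (`EG − F² = −(1 + u'²) < 0`) and is a translating soliton
with respect to `v = (0,1,v₃)` at every point `(s,t)` with `cos(s+a) > 0`. -/
theorem stmt9 (a b v₃ : ℝ) (u : ℝ → ℝ)
    (hu : u = fun s => -Real.log (Real.cos (s + a)) + b) :
    (∀ s : ℝ, 0 < Real.cos (s + a) → deriv (deriv u) s = 1 + (deriv u s) ^ 2) ∧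
    (∀ s t : ℝ, 0 < Real.cos (s + a) →
        disc (fun s t => ![s, u s, t]) s t = -(1 + (deriv u s) ^ 2) ∧
        disc (fun s t => ![s, u s, t]) s t < 0 ∧
        SolitonEqAt (fun s t => ![s, u s, t]) ![0, 1, v₃] s t) := by
  subst hu
  set u : ℝ → ℝ := fun s => -Real.log (Real.cos (s + a)) + b with hu
  have hu' : ∀ x : ℝ, 0 < Real.cos (x + a) → HasDerivAt u (Real.tan (x + a)) x :=
    fun x hx => hu_deriv a b hx
  have hopen : IsOpen {x : ℝ | 0 < Real.cos (x + a)} :=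
    isOpen_lt continuous_const (Real.continuous_cos.comp (continuous_id.add continuous_const))
  have hderiv_u : ∀ x : ℝ, 0 < Real.cos (x + a) → deriv u x = Real.tan (x + a) :=
    fun x hx => (hu' x hx).deriv
  set X : ℝ → ℝ → Fin 3 → ℝ := fun s t => ![s, u s, t] with hX
  -- pT is constantly (0,0,1)
  have hXt : ∀ s' t' : ℝ, pT X s' t' = ![0, 0, 1] := by
    intro s' t'
    have : HasDerivAt (fun b' => (![s', u s', b'] : Fin 3 → ℝ)) ![0, 0, 1] t' := by
      rw [hasDerivAt_pi]
      intro i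
      fin_cases i <;> simp
      · exact hasDerivAt_const t' s'
      · exact hasDerivAt_const t' (u s')
      · exact hasDerivAt_id t'
    exact this.deriv
  have hTT : ∀ s' t' : ℝ, pTT X s' t' = 0 := by
    intro s' t'
    unfold pTT
    have : (fun b => pT X s' b) = fun _ => (![0, 0, 1] : Fin 3 → ℝ) := funext fun b => hXt s' b
    rw [this, deriv_const]
  have hST : ∀ s' t' : ℝ, pST X s' t' = 0 := by
    intro s' t'
    unfold pST
    have : (fun a' => pT X a' t') = fun _ => (![0, 0, 1] : Fin 3 → ℝ) := funext fun x => hXt x t'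
    rw [this, deriv_const]
  have hpS : ∀ t' : ℝ, ∀ x : ℝ, 0 < Real.cos (x + a) →
      pS X x t' = ![1, Real.tan (x + a), 0] := by
    intro t' x hx
    exact (hXs u t' (hu' x hx)).deriv
  have hpSS : ∀ t' : ℝ, ∀ x : ℝ, 0 < Real.cos (x + a) →
      pSS X x t' = ![0, 1 + Real.tan (x + a) ^ 2, 0] := by
    intro t' x hx
    unfold pSS
    have hev : (fun a' => pS X a' t') =ᶠ[nhds x] fun y => ![1, Real.tan (y + a), 0] := by
      filter_upwards [hopen.mem_nhds hx] with y hy using hpS t' y hy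
    rw [hev.deriv_eq]
    have : HasDerivAt (fun y => (![1, Real.tan (y + a), 0] : Fin 3 → ℝ))
        ![0, 1 + Real.tan (x + a) ^ 2, 0] x := by
      rw [hasDerivAt_pi]
      intro i
      fin_cases i <;> simp
      · exact hasDerivAt_const x 1
      · exact htan_deriv a hx
      · exact hasDerivAt_const x (0 : ℝ)
    exact this.deriv
  constructor
  · intro s hs
    have hev : deriv u =ᶠ[nhds s] fun x => Real.tan (x + a) := by
      filter_upwards [hopen.mem_nhds hs] with x hx using hderiv_u x hx
    rw [hev.deriv_eq, (htan_deriv a hs).deriv, hderiv_u s hs]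
  · intro s t hs
    have h1 := hpS t s hs
    have h2 := hXt s t
    have h3 := hpSS t s hs
    have h4 := hST s t
    have h5 := hTT s t
    set T := Real.tan (s + a) with hT
    have hdisc : disc X s t = -(1 + T ^ 2) := by
      simp [disc, coefE, coefF, coefG, mink, h1, h2]
      ring
    have hpos : (0:ℝ) < 1 + T ^ 2 := by positivity
    refine ⟨by rw [hdisc, hderiv_u s hs], by rw [hdisc]; linarith, ?_⟩
    unfold SolitonEqAt
    rw [hdisc]
    have habs : |-(1 + T ^ 2)| = 1 + T ^ 2 := by rw [abs_neg, abs_of_pos hpos]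
    simp only [coefE, coefF, coefG, mink, det3, h1, h2, h3, h4, h5, habs]
    simp [Matrix.cons_val_zero, Matrix.cons_val_one]
end
end

section
/- (Theorem 2, normalized form: a non-cylindrical ruled translating soliton with lightlike rulings cannot exist.) Let I ⊆ ℝ be an open interval and γ, w : I → ℝ³ be C² maps such that for all s ∈ I: ⟨w(s),w(s)⟩ = 0, ⟨w'(s),w'(s)⟩ = 1, ⟨γ'(s),w(s)⟩ ≠ 0 and ⟨γ'(s),w'(s)⟩ = 0 (here ⟨,⟩ is the Lorentzian inner product). Then for every vector v ∈ ℝ³ and every nonempty open interval J ⊆ ℝ, the ruled surface X(s,t) = γ(s) + t·w(s) does not satisfy the translating soliton equation with respect to v at every point of I × J. -/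
noncomputable section

/- ## auxiliary lemmas -/

lemma lightlike_par (u0 u1 u2 w0 w1 w2 : ℝ) (hw2 : w2 ≠ 0)
    (huu : u0^2 + u1^2 - u2^2 = 0) (hww : w0^2 + w1^2 - w2^2 = 0)
    (huw : u0*w0 + u1*w1 - u2*w2 = 0) :
    ∃ c : ℝ, u0 = c*w0 ∧ u1 = c*w1 ∧ u2 = c*w2 := by
  have key : (u0*w2 - u2*w0)^2 + (u1*w2 - u2*w1)^2 = 0 := by
    linear_combination w2^2*huu + u2^2*hww - 2*(u2*w2)*huw
  have e1 : u0*w2 = u2*w0 := by nlinarith [sq_nonneg (u0*w2 - u2*w0), sq_nonneg (u1*w2 - u2*w1)]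
  have e2 : u1*w2 = u2*w1 := by nlinarith [sq_nonneg (u0*w2 - u2*w0), sq_nonneg (u1*w2 - u2*w1)]
  refine ⟨u2/w2, ?_, ?_, ?_⟩ <;> field_simp <;> linarith [e1, e2]

lemma key_alg (w0 w1 w2 a0 a1 a2 g0 g1 g2 v0 v1 v2 : ℝ)
    (h1 : w0^2 + w1^2 - w2^2 = 0)
    (h2 : a0^2 + a1^2 - a2^2 = 1)
    (h3 : w0*a0 + w1*a1 - w2*a2 = 0)
    (hf : g0*w0 + g1*w1 - g2*w2 ≠ 0)
    (hC : a0*(w1*v2 - w2*v1) - a1*(w0*v2 - w2*v0) + a2*(w0*v1 - w1*v0) = 0)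
    (h6 : 2*(g0*(w1*a2 - w2*a1) - g1*(w0*a2 - w2*a0) + g2*(w0*a1 - w1*a0))
        = (g0*w0 + g1*w1 - g2*w2) * (g0*(w1*v2 - w2*v1) - g1*(w0*v2 - w2*v0) + g2*(w0*v1 - w1*v0))) :
    v0*w0 + v1*w1 - v2*w2 = 0 ∧ (v0*a0 + v1*a1 - v2*a2) * (g0*w0 + g1*w1 - g2*w2) = 2 := by
  have hw2 : w2 ≠ 0 := by
    intro h
    apply hf
    have h0 : w0 = 0 := by nlinarith [sq_nonneg w0, sq_nonneg w1]
    have h1' : w1 = 0 := by nlinarith [sq_nonneg w0, sq_nonneg w1]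
    rw [h0, h1', h]; ring
  obtain ⟨c, hc0, hc1, hc2⟩ := lightlike_par (w1*a2 - w2*a1) (w2*a0 - w0*a2) (w1*a0 - w0*a1)
      w0 w1 w2 hw2
      (by linear_combination (w0*a0 + w1*a1 - w2*a2)*h3 - (a0^2+a1^2-a2^2)*h1)
      h1 (by ring)
  have hcne : c ≠ 0 := by
    intro h
    rw [h] at hc0 hc1 hc2
    have : w2^2 = 0 := by
      linear_combination (-(w2^2))*h2 + a2^2*h1 - (w2*a1+a2*w1)*(by linarith [hc0] : w1*a2 - w2*a1 = 0) + (w2*a0+a2*w0)*(by linarith [hc1] : w2*a0 - w0*a2 = 0)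
    exact hw2 (by nlinarith)
  have hG1 : v0*w0 + v1*w1 - v2*w2 = 0 := by
    have h' : c * (v0*w0 + v1*w1 - v2*w2) = 0 := by
      linear_combination -hC - v0*hc0 - v1*hc1 + v2*hc2
    rcases mul_eq_zero.1 h' with h | h
    · exact absurd h hcne
    · exact h
  refine ⟨hG1, ?_⟩
  obtain ⟨d, hd0, hd1, hd2⟩ := lightlike_par (w1*v2 - w2*v1) (w2*v0 - w0*v2) (w1*v0 - w0*v1)
      w0 w1 w2 hw2
      (by linear_combination (w0*v0 + w1*v1 - w2*v2)*hG1 - (v0^2+v1^2-v2^2)*h1)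
      h1 (by ring)
  have h6' : (2*c) * (g0*w0 + g1*w1 - g2*w2) = (d * (g0*w0 + g1*w1 - g2*w2)) * (g0*w0 + g1*w1 - g2*w2) := by
    linear_combination h6 - 2*(g0*hc0 + g1*hc1 - g2*hc2) + (g0*w0 + g1*w1 - g2*w2)*(g0*hd0 + g1*hd1 - g2*hd2)
  have hcd : 2*c = d * (g0*w0 + g1*w1 - g2*w2) := mul_right_cancel₀ hf h6'
  have hx0 : (c*v0 - d*a0)*w2 = (c*v2 - d*a2)*w0 := by
    linear_combination c*hd1 - d*hc1
  have hx1 : (c*v1 - d*a1)*w2 = (c*v2 - d*a2)*w1 := by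
    linear_combination -c*hd0 + d*hc0
  have hxa : (c*(v0*a0 + v1*a1 - v2*a2) - d*(a0^2+a1^2-a2^2)) * w2 = 0 := by
    linear_combination a0*hx0 + a1*hx1 + (c*v2 - d*a2)*h3
  have hxa' : c*(v0*a0 + v1*a1 - v2*a2) = d := by
    rcases mul_eq_zero.1 hxa with h | h
    · linear_combination h + d*h2
    · exact absurd h hw2
  have final : c * ((v0*a0 + v1*a1 - v2*a2) * (g0*w0 + g1*w1 - g2*w2) - 2) = 0 := by
    linear_combination (g0*w0 + g1*w1 - g2*w2)*hxa' - hcd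
  rcases mul_eq_zero.1 final with h | h
  · exact absurd h hcne
  · linarith [h]

lemma mink_add_left (a b c : Fin 3 → ℝ) : mink (a + b) c = mink a c + mink b c := by
  simp only [mink, Pi.add_apply]; ring

lemma mink_add_right (a b c : Fin 3 → ℝ) : mink a (b + c) = mink a b + mink a c := by
  simp only [mink, Pi.add_apply]; ring

lemma mink_smul_left (t : ℝ) (a c : Fin 3 → ℝ) : mink (t • a) c = t * mink a c := by
  simp only [mink, Pi.smul_apply, smul_eq_mul]; ring

lemma mink_smul_right (t : ℝ) (a c : Fin 3 → ℝ) : mink a (t • c) = t * mink a c := by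
  simp only [mink, Pi.smul_apply, smul_eq_mul]; ring

lemma det3_add_left (a b c d : Fin 3 → ℝ) : det3 (a + b) c d = det3 a c d + det3 b c d := by
  simp only [det3, Pi.add_apply]; ring

lemma det3_smul_left (t : ℝ) (a c d : Fin 3 → ℝ) : det3 (t • a) c d = t * det3 a c d := by
  simp only [det3, Pi.smul_apply, smul_eq_mul]; ring

lemma det3_zero3 (a b : Fin 3 → ℝ) : det3 a b 0 = 0 := by
  simp [det3]

lemma det3_13 (a b : Fin 3 → ℝ) : det3 a b a = 0 := by
  simp only [det3]; ring

lemma deriv_zero_on (I : Set ℝ) (hIopen : IsOpen I) (φ : ℝ → ℝ)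
    (hφ : ∀ x ∈ I, φ x = 0) (s : ℝ) (hs : s ∈ I) (D : ℝ) (hD : HasDerivAt φ D s) :
    D = 0 := by
  have h1 : φ =ᶠ[nhds s] (fun _ => 0) :=
    Filter.eventuallyEq_of_mem (hIopen.mem_nhds hs) hφ
  have h2 := h1.deriv_eq
  rw [hD.deriv, deriv_const'] at h2
  exact h2

/-- Theorem 2, normalized form: a non-cylindrical ruled surface with
lightlike rulings, normalized so that `⟨w,w⟩ = 0`, `⟨w',w'⟩ = 1`, `⟨γ',w⟩ ≠ 0`,
`⟨γ',w'⟩ = 0` on a nonempty open interval `I`, is never a translating soliton: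
for every `v` and every nonempty open interval `J`, the translating soliton equation
fails at some point of `I × J`. -/
theorem stmt10 (I : Set ℝ) (hIopen : IsOpen I) (hIconn : I.OrdConnected)
    (hIne : I.Nonempty)
    (γ w : ℝ → Fin 3 → ℝ)
    (hγ : ContDiffOn ℝ 2 γ I) (hw : ContDiffOn ℝ 2 w I)
    (hw0 : ∀ s ∈ I, mink (w s) (w s) = 0)
    (hw1 : ∀ s ∈ I, mink (deriv w s) (deriv w s) = 1)
    (hγw : ∀ s ∈ I, mink (deriv γ s) (w s) ≠ 0)
    (hγw' : ∀ s ∈ I, mink (deriv γ s) (deriv w s) = 0)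
    (v : Fin 3 → ℝ)
    (J : Set ℝ) (hJopen : IsOpen J) (hJconn : J.OrdConnected) (hJne : J.Nonempty) :
    ¬ (∀ s ∈ I, ∀ t ∈ J, SolitonEqAt (fun s t => γ s + t • w s) v s t) := by
  intro H
  set X : ℝ → ℝ → Fin 3 → ℝ := fun s t => γ s + t • w s with hX
  -- basic differentiability
  have hdw : ∀ s ∈ I, HasDerivAt w (deriv w s) s := fun s hs =>
    ((hw.differentiableOn (by norm_num)).differentiableAt (hIopen.mem_nhds hs)).hasDerivAt
  have hdγ : ∀ s ∈ I, HasDerivAt γ (deriv γ s) s := fun s hs =>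
    ((hγ.differentiableOn (by norm_num)).differentiableAt (hIopen.mem_nhds hs)).hasDerivAt
  have hdwi : ∀ s ∈ I, ∀ i, HasDerivAt (fun x => w x i) (deriv w s i) s := fun s hs =>
    hasDerivAt_pi.1 (hdw s hs)
  -- differentiate ⟨w,w⟩=0 : ⟨w,w'⟩ = 0 on I
  have hm : ∀ s ∈ I, mink (w s) (deriv w s) = 0 := by
    intro s hs
    have hD : HasDerivAt (fun x => mink (w x) (w x))
        ((deriv w s 0 * w s 0 + w s 0 * deriv w s 0)
          + (deriv w s 1 * w s 1 + w s 1 * deriv w s 1)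
          - (deriv w s 2 * w s 2 + w s 2 * deriv w s 2)) s := by
      simp only [mink]
      exact (((hdwi s hs 0).mul (hdwi s hs 0)).add
        ((hdwi s hs 1).mul (hdwi s hs 1))).sub ((hdwi s hs 2).mul (hdwi s hs 2))
    have := deriv_zero_on I hIopen _ hw0 s hs _ hD
    simp only [mink]
    linarith [this]
  -- partial derivative computations
  have hpT : ∀ a t : ℝ, pT X a t = w a := by
    intro a t
    have h : HasDerivAt (fun b : ℝ => γ a + b • w a) ((1:ℝ) • w a) t :=
      ((hasDerivAt_id t).smul_const (w a)).const_add (γ a)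
    rw [one_smul] at h
    exact h.deriv
  have hpTT : ∀ s t : ℝ, pTT X s t = 0 := by
    intro s t
    unfold pTT
    have h : (fun b => pT X s b) = fun _ => w s := funext fun b => hpT s b
    rw [h, deriv_const']
  have hpST : ∀ s t : ℝ, pST X s t = deriv w s := by
    intro s t
    unfold pST
    have h : (fun a => pT X a t) = w := funext fun a => hpT a t
    rw [h]
  have hpS : ∀ s ∈ I, ∀ t : ℝ, pS X s t = deriv γ s + t • deriv w s := by
    intro s hs t
    exact ((hdγ s hs).add ((hdw s hs).const_smul t)).deriv
  -- the reduced soliton equation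
  have main : ∀ s ∈ I, mink v (w s) = 0 ∧
      mink v (deriv w s) * mink (deriv γ s) (w s) = 2 := by
    intro s hs
    have hm' : mink (deriv w s) (w s) = 0 := by
      have := hm s hs; simp only [mink] at this ⊢; linarith
    have eq : ∀ t ∈ J, 2 * mink (deriv γ s) (w s) * det3 (deriv γ s) (w s) (deriv w s)
        = (mink (deriv γ s) (w s))^2 * det3 (deriv γ s) (w s) v
          + t * ((mink (deriv γ s) (w s))^2 * det3 (deriv w s) (w s) v) := by
      intro t ht
      have hEq := H s hs t ht
      unfold SolitonEqAt at hEq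
      unfold disc at hEq
      unfold coefE coefF coefG at hEq
      rw [hpS s hs t, hpT, hpTT, hpST] at hEq
      rw [hw0 s hs, det3_zero3] at hEq
      simp only [mink_add_left, mink_smul_left, det3_add_left, det3_smul_left, det3_13,
        hm', mul_zero, zero_mul, add_zero, zero_add, zero_sub, abs_neg,
        abs_of_nonneg (sq_nonneg (mink (deriv γ s) (w s)))] at hEq
      linear_combination -hEq
    -- get two parameter values in J
    obtain ⟨t₀, ht₀⟩ := hJne
    obtain ⟨ε, hε, hball⟩ := Metric.isOpen_iff.1 hJopen t₀ ht₀
    have ht₁ : t₀ + ε/2 ∈ J := by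
      apply hball
      simp only [Metric.mem_ball, Real.dist_eq, add_sub_cancel_left, abs_of_pos (by linarith : (0:ℝ) < ε/2)]
      linarith
    have e0 := eq t₀ ht₀
    have e1 := eq (t₀ + ε/2) ht₁
    have hC0 : (mink (deriv γ s) (w s))^2 * det3 (deriv w s) (w s) v = 0 := by
      have h : (ε/2) * ((mink (deriv γ s) (w s))^2 * det3 (deriv w s) (w s) v) = 0 := by
        linear_combination e0 - e1
      rcases mul_eq_zero.1 h with h' | h'
      · exact absurd h' (by positivity)
      · exact h'
    have hC : det3 (deriv w s) (w s) v = 0 := by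
      rcases mul_eq_zero.1 hC0 with h' | h'
      · exact absurd h' (pow_ne_zero 2 (hγw s hs))
      · exact h'
    have h6 : 2 * det3 (deriv γ s) (w s) (deriv w s)
        = mink (deriv γ s) (w s) * det3 (deriv γ s) (w s) v := by
      apply mul_left_cancel₀ (hγw s hs)
      linear_combination e0 + t₀ * hC0
    -- componentwise versions
    have h1' := hw0 s hs
    have h2' := hw1 s hs
    have h3' := hm s hs
    have hf' := hγw s hs
    simp only [mink] at h1' h2' h3' hf'
    simp only [det3] at hC h6
    simp only [mink] at h6
    have K := key_alg (w s 0) (w s 1) (w s 2) (deriv w s 0) (deriv w s 1) (deriv w s 2)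
      (deriv γ s 0) (deriv γ s 1) (deriv γ s 2) (v 0) (v 1) (v 2)
      (by linear_combination h1') (by linear_combination h2') (by linear_combination h3')
      hf' hC h6
    constructor
    · simp only [mink]; linarith [K.1]
    · simp only [mink]; linear_combination K.2
  -- differentiate ⟨v, w⟩ = 0 on I
  obtain ⟨s₀, hs₀⟩ := hIne
  have hvw' : mink v (deriv w s₀) = 0 := by
    have hD : HasDerivAt (fun x => mink v (w x))
        (v 0 * deriv w s₀ 0 + v 1 * deriv w s₀ 1 - v 2 * deriv w s₀ 2) s₀ := by
      simp only [mink]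
      exact (((hdwi s₀ hs₀ 0).const_mul (v 0)).add
        ((hdwi s₀ hs₀ 1).const_mul (v 1))).sub ((hdwi s₀ hs₀ 2).const_mul (v 2))
    have := deriv_zero_on I hIopen _ (fun x hx => (main x hx).1) s₀ hs₀ _ hD
    simp only [mink]
    linarith [this]
  have := (main s₀ hs₀).2
  rw [hvw'] at this
  norm_num at this
end
end

section
/- (Key lemma in the proof of Theorem 2.) Let I ⊆ ℝ be an open interval and w : I → ℝ³ a C² map with ⟨w(s),w(s)⟩ = 0 and ⟨w'(s),w'(s)⟩ = 1 for all s ∈ I, where ⟨,⟩ is the Lorentzian inner product. If v ∈ ℝ³ satisfies det(w'(s), w(s), v) = 0 for all s ∈ I, then for every s ∈ I the vector v is a scalar multiple of w(s). -/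
noncomputable section

/-- key lemma in the proof of Theorem 2: if `w` is a C² map on an open
interval `I` with `⟨w,w⟩ = 0` and `⟨w',w'⟩ = 1` (Lorentzian products), and `v` satisfies
`det(w'(s), w(s), v) = 0` for all `s ∈ I`, then `v` is a scalar multiple of `w(s)` for
every `s ∈ I`. -/
theorem stmt11 (I : Set ℝ) (hIopen : IsOpen I) (hIconn : I.OrdConnected)
    (w : ℝ → Fin 3 → ℝ) (hw : ContDiffOn ℝ 2 w I)
    (hw0 : ∀ s ∈ I, mink (w s) (w s) = 0)
    (hw1 : ∀ s ∈ I, mink (deriv w s) (deriv w s) = 1)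
    (v : Fin 3 → ℝ)
    (hv : ∀ s ∈ I, det3 (deriv w s) (w s) v = 0) :
    ∀ s ∈ I, ∃ c : ℝ, v = c • w s := by
  -- derivatives exist
  have hwd : ∀ t ∈ I, HasDerivAt w (deriv w t) t := by
    intro t ht
    exact ((hw.differentiableOn two_ne_zero).differentiableAt (hIopen.mem_nhds ht)).hasDerivAt
  have hw' : ContDiffOn ℝ 1 (deriv w) I := hw.deriv_of_isOpen hIopen (by norm_num)
  have hwd2 : ∀ t ∈ I, HasDerivAt (deriv w) (deriv (deriv w) t) t := by
    intro t ht
    exact ((hw'.differentiableOn one_ne_zero).differentiableAt (hIopen.mem_nhds ht)).hasDerivAt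
  have hc : ∀ t ∈ I, ∀ i, HasDerivAt (fun u => w u i) (deriv w t i) t := by
    intro t ht i; exact hasDerivAt_pi.1 (hwd t ht) i
  have hc2 : ∀ t ∈ I, ∀ i, HasDerivAt (fun u => deriv w u i) (deriv (deriv w) t i) t := by
    intro t ht i; exact hasDerivAt_pi.1 (hwd2 t ht) i
  -- a helper: derivative of a function vanishing on I is zero
  have hzero : ∀ (f : ℝ → ℝ) (t D : ℝ), t ∈ I → HasDerivAt f D t →
      (∀ x ∈ I, f x = 0) → D = 0 := by
    intro f t D ht hf h0
    have he : f =ᶠ[nhds t] (fun _ => (0:ℝ)) :=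
      Filter.eventuallyEq_of_mem (hIopen.mem_nhds ht) h0
    have h1 : deriv f t = deriv (fun _ => (0:ℝ)) t := he.deriv_eq
    rw [hf.deriv, deriv_const] at h1
    exact h1
  -- mink (w t) (deriv w t) = 0
  have hab : ∀ t ∈ I, mink (w t) (deriv w t) = 0 := by
    intro t ht
    have hD : HasDerivAt (fun u => mink (w u) (w u)) (2 * mink (w t) (deriv w t)) t := by
      have := (((hc t ht 0).mul (hc t ht 0)).add ((hc t ht 1).mul (hc t ht 1))).sub
        ((hc t ht 2).mul (hc t ht 2))
      simp only [mink]
      convert this using 1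
      any_goals rfl
      ring
    have := hzero _ t _ ht hD hw0
    linarith
  -- mink (deriv w t) (deriv² w t) = 0
  have hbc : ∀ t ∈ I, mink (deriv w t) (deriv (deriv w) t) = 0 := by
    intro t ht
    have hD : HasDerivAt (fun u => mink (deriv w u) (deriv w u) - 1)
        (2 * mink (deriv w t) (deriv (deriv w) t)) t := by
      have := ((((hc2 t ht 0).mul (hc2 t ht 0)).add ((hc2 t ht 1).mul (hc2 t ht 1))).sub
        ((hc2 t ht 2).mul (hc2 t ht 2))).sub_const 1
      simp only [mink]
      convert this using 1
      any_goals rfl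
      ring
    have := hzero _ t _ ht hD (fun x hx => by rw [hw1 x hx]; ring)
    linarith
  -- mink (w t) (deriv² w t) = -1
  have hac : ∀ t ∈ I, mink (w t) (deriv (deriv w) t) = -1 := by
    intro t ht
    have hD : HasDerivAt (fun u => mink (w u) (deriv w u))
        (mink (deriv w t) (deriv w t) + mink (w t) (deriv (deriv w) t)) t := by
      have := (((hc t ht 0).mul (hc2 t ht 0)).add ((hc t ht 1).mul (hc2 t ht 1))).sub
        ((hc t ht 2).mul (hc2 t ht 2))
      simp only [mink]
      convert this using 1
      any_goals rfl
      ring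
    have := hzero _ t _ ht hD hab
    rw [hw1 t ht] at this
    linarith
  -- det3 (deriv² w t) (w t) v = 0
  have hcav : ∀ t ∈ I, det3 (deriv (deriv w) t) (w t) v = 0 := by
    intro t ht
    have hD : HasDerivAt (fun u => det3 (deriv w u) (w u) v)
        (det3 (deriv (deriv w) t) (w t) v + det3 (deriv w t) (deriv w t) v) t := by
      have h0 := (hc2 t ht 0).mul (((hc t ht 1).mul_const (v 2)).sub ((hc t ht 2).mul_const (v 1)))
      have h1 := (hc2 t ht 1).mul (((hc t ht 0).mul_const (v 2)).sub ((hc t ht 2).mul_const (v 0)))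
      have h2 := (hc2 t ht 2).mul (((hc t ht 0).mul_const (v 1)).sub ((hc t ht 1).mul_const (v 0)))
      have := (h0.sub h1).add h2
      simp only [det3]
      convert this using 1
      any_goals rfl
      simp only [Pi.sub_apply]
      ring
    have hz := hzero _ t _ ht hD (fun x hx => hv x hx)
    have : det3 (deriv w t) (deriv w t) v = 0 := by simp only [det3]; ring
    linarith
  -- now the pointwise algebra
  intro s hs
  set a := w s with ha
  set b := deriv w s with hb
  set c := deriv (deriv w) s with hcc
  have e1 : mink a a = 0 := hw0 s hs
  have e2 : mink b b = 1 := hw1 s hs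
  have e3 : mink a b = 0 := hab s hs
  have e4 : mink b c = 0 := hbc s hs
  have e5 : mink a c = -1 := hac s hs
  have e6 : det3 b a v = 0 := hv s hs
  have e7 : det3 c a v = 0 := hcav s hs
  have key : det3 a b c ^ 2 =
      -(mink a a * (mink b b * mink c c - mink b c ^ 2)
        - mink a b * (mink a b * mink c c - mink b c * mink a c)
        + mink a c * (mink a b * mink b c - mink b b * mink a c)) := by
    simp only [det3, mink]; ring
  rw [e1, e2, e3, e4, e5] at key
  have hd2 : det3 a b c ^ 2 = 1 := by rw [key]; ring
  have hdne : det3 a b c ≠ 0 := by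
    intro h; rw [h] at hd2; norm_num at hd2
  refine ⟨det3 v b c / det3 a b c, ?_⟩
  have h1 : det3 a v c = 0 := by
    have : det3 a v c = det3 c a v := by simp only [det3]; ring
    rw [this, e7]
  have h2 : det3 a b v = 0 := by
    have : det3 a b v = -det3 b a v := by simp only [det3]; ring
    rw [this, e6]; ring
  funext i
  have cram : det3 a b c * v i
      = det3 v b c * a i + det3 a v c * b i + det3 a b v * c i := by
    fin_cases i <;> · simp only [det3, Fin.zero_eta, Fin.mk_one, Fin.reduceFinMk]; ring
  rw [h1, h2] at cram
  have : v i = det3 v b c / det3 a b c * a i := by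
    field_simp
    linarith [cram]
  simpa using this
end
end

section
/- (First conclusion of Theorem 3.) Let I ⊆ ℝ be an open interval, δ, η ∈ {−1,1}, and γ, w : I → ℝ³ C² maps with ⟨w(s),w(s)⟩ = δ, ⟨w'(s),w'(s)⟩ = η and ⟨γ'(s),w'(s)⟩ = 0 for all s ∈ I. Let v ∈ ℝ³, let J ⊆ ℝ be a nonempty open interval, set X(s,t) = γ(s) + t·w(s), and suppose there is ε ∈ {−1,1} with ε·(EG − F²) < 0 at every point of I × J. If X satisfies the translating soliton equation with respect to v at every point of I × J, then det(w(s), w'(s), v) = 0 for all s ∈ I; consequently, for each s, v lies in the linear span of w(s) and w'(s). -/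
noncomputable section

lemma pT_ruled (γ w : ℝ → Fin 3 → ℝ) (s t : ℝ) :
    pT (fun s t => γ s + t • w s) s t = w s := by
  have h : HasDerivAt (fun b : ℝ => γ s + b • w s) ((1:ℝ) • w s) t :=
    ((hasDerivAt_id t).smul_const (w s)).const_add (γ s)
  show deriv (fun b : ℝ => γ s + b • w s) t = w s
  rw [h.deriv, one_smul]

lemma pTT_ruled (γ w : ℝ → Fin 3 → ℝ) (s t : ℝ) :
    pTT (fun s t => γ s + t • w s) s t = 0 := by
  show deriv (fun b : ℝ => pT (fun s t => γ s + t • w s) s b) t = 0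
  have : (fun b : ℝ => pT (fun s t => γ s + t • w s) s b) = fun _ => w s :=
    funext fun b => pT_ruled γ w s b
  rw [this, deriv_const]

lemma pST_ruled (γ w : ℝ → Fin 3 → ℝ) (s t : ℝ) :
    pST (fun s t => γ s + t • w s) s t = deriv w s := by
  show deriv (fun a : ℝ => pT (fun s t => γ s + t • w s) a t) s = deriv w s
  have : (fun a : ℝ => pT (fun s t => γ s + t • w s) a t) = w :=
    funext fun a => pT_ruled γ w a t
  rw [this]

lemma pS_ruled (γ w : ℝ → Fin 3 → ℝ) (s t : ℝ)
    (hγ : DifferentiableAt ℝ γ s) (hw : DifferentiableAt ℝ w s) :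
    pS (fun s t => γ s + t • w s) s t = deriv γ s + t • deriv w s := by
  show deriv (fun a : ℝ => γ a + t • w a) s = _
  exact (hγ.hasDerivAt.add ((hw.hasDerivAt).const_smul t)).deriv

lemma pSS_ruled (γ w : ℝ → Fin 3 → ℝ) (I : Set ℝ) (hIopen : IsOpen I) {s : ℝ} (hs : s ∈ I)
    (t : ℝ)
    (hγd : ∀ a ∈ I, DifferentiableAt ℝ γ a) (hwd : ∀ a ∈ I, DifferentiableAt ℝ w a)
    (hγ'd : DifferentiableAt ℝ (deriv γ) s) (hw'd : DifferentiableAt ℝ (deriv w) s) :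
    pSS (fun s t => γ s + t • w s) s t = deriv (deriv γ) s + t • deriv (deriv w) s := by
  show deriv (fun a : ℝ => pS (fun s t => γ s + t • w s) a t) s = _
  have hev : (fun a : ℝ => pS (fun s t => γ s + t • w s) a t)
      =ᶠ[nhds s] (fun a => deriv γ a + t • deriv w a) := by
    filter_upwards [hIopen.mem_nhds hs] with a ha
    exact pS_ruled γ w a t (hγd a ha) (hwd a ha)
  rw [hev.deriv_eq]
  exact (hγ'd.hasDerivAt.add ((hw'd.hasDerivAt).const_smul t)).deriv

lemma mink_self_deriv_zero (w : ℝ → Fin 3 → ℝ) (I : Set ℝ) (hIopen : IsOpen I)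
    {s : ℝ} (hs : s ∈ I) (δ : ℝ)
    (hwd : ∀ a ∈ I, DifferentiableAt ℝ w a)
    (hconst : ∀ a ∈ I, mink (w a) (w a) = δ) :
    mink (w s) (deriv w s) = 0 := by
  have hcomp : ∀ a ∈ I, ∀ i, HasDerivAt (fun x => w x i) (deriv w a i) a := by
    intro a ha i
    exact hasDerivAt_pi.mp (hwd a ha).hasDerivAt i
  have hg : HasDerivAt (fun x => mink (w x) (w x)) (2 * mink (w s) (deriv w s)) s := by
    have h0 := hcomp s hs 0
    have h1 := hcomp s hs 1
    have h2 := hcomp s hs 2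
    have h := ((h0.mul h0).add (h1.mul h1)).sub (h2.mul h2)
    have heq : 2 * mink (w s) (deriv w s)
        = deriv w s 0 * w s 0 + w s 0 * deriv w s 0 +
          (deriv w s 1 * w s 1 + w s 1 * deriv w s 1) -
          (deriv w s 2 * w s 2 + w s 2 * deriv w s 2) := by
      simp [mink]; ring
    rw [heq]
    exact h
  have hzero : deriv (fun x => mink (w x) (w x)) s = 0 := by
    have hev : (fun x => mink (w x) (w x)) =ᶠ[nhds s] (fun _ => δ) := by
      filter_upwards [hIopen.mem_nhds hs] with a ha using hconst a ha
    rw [hev.deriv_eq, deriv_const]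
  have := hg.deriv
  rw [hzero] at this
  linarith

/-- first conclusion of Theorem 3: for a non-cylindrical ruled surface
`X(s,t) = γ(s) + t·w(s)` normalized by `⟨w,w⟩ = δ`, `⟨w',w'⟩ = η` (`δ,η ∈ {−1,1}`) and
`⟨γ',w'⟩ = 0`, which is non-degenerate with sign `ε` (`ε·(EG−F²) < 0`) on `I × J` and
satisfies the translating soliton equation w.r.t. `v` on `I × J`, one has
`det(w(s), w'(s), v) = 0` for all `s ∈ I`; consequently `v ∈ span{w(s), w'(s)}`. -/
theorem stmt12 (I : Set ℝ) (hIopen : IsOpen I) (hIconn : I.OrdConnected)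
    (δ η : ℝ) (hδ : δ = 1 ∨ δ = -1) (hη : η = 1 ∨ η = -1)
    (γ w : ℝ → Fin 3 → ℝ)
    (hγ : ContDiffOn ℝ 2 γ I) (hw : ContDiffOn ℝ 2 w I)
    (hwδ : ∀ s ∈ I, mink (w s) (w s) = δ)
    (hwη : ∀ s ∈ I, mink (deriv w s) (deriv w s) = η)
    (hstr : ∀ s ∈ I, mink (deriv γ s) (deriv w s) = 0)
    (v : Fin 3 → ℝ)
    (J : Set ℝ) (hJopen : IsOpen J) (hJconn : J.OrdConnected) (hJne : J.Nonempty)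
    (ε : ℝ) (hε : ε = 1 ∨ ε = -1)
    (hnd : ∀ s ∈ I, ∀ t ∈ J, ε * disc (fun s t => γ s + t • w s) s t < 0)
    (hsol : ∀ s ∈ I, ∀ t ∈ J, SolitonEqAt (fun s t => γ s + t • w s) v s t) :
    ∀ s ∈ I, det3 (w s) (deriv w s) v = 0 ∧
      v ∈ Submodule.span ℝ ({w s, deriv w s} : Set (Fin 3 → ℝ)) := by
  intro s hs
  -- differentiability facts
  have hγd : ∀ a ∈ I, DifferentiableAt ℝ γ a := fun a ha =>
    (hγ.differentiableOn (by norm_num)).differentiableAt (hIopen.mem_nhds ha)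
  have hwd : ∀ a ∈ I, DifferentiableAt ℝ w a := fun a ha =>
    (hw.differentiableOn (by norm_num)).differentiableAt (hIopen.mem_nhds ha)
  have hγ1 : ContDiffOn ℝ 1 (deriv γ) I := hγ.deriv_of_isOpen hIopen (by norm_num)
  have hw1 : ContDiffOn ℝ 1 (deriv w) I := hw.deriv_of_isOpen hIopen (by norm_num)
  have hγ'd : DifferentiableAt ℝ (deriv γ) s :=
    (hγ1.differentiableOn (by norm_num)).differentiableAt (hIopen.mem_nhds hs)
  have hw'd : DifferentiableAt ℝ (deriv w) s :=
    (hw1.differentiableOn (by norm_num)).differentiableAt (hIopen.mem_nhds hs)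
  -- pointwise partial derivatives at this s
  have hpS : ∀ t : ℝ, pS (fun s t => γ s + t • w s) s t = deriv γ s + t • deriv w s :=
    fun t => pS_ruled γ w s t (hγd s hs) (hwd s hs)
  have hpT : ∀ t : ℝ, pT (fun s t => γ s + t • w s) s t = w s := fun t => pT_ruled γ w s t
  have hpTT : ∀ t : ℝ, pTT (fun s t => γ s + t • w s) s t = 0 := fun t => pTT_ruled γ w s t
  have hpST : ∀ t : ℝ, pST (fun s t => γ s + t • w s) s t = deriv w s :=
    fun t => pST_ruled γ w s t
  have hpSS : ∀ t : ℝ, pSS (fun s t => γ s + t • w s) s t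
      = deriv (deriv γ) s + t • deriv (deriv w) s :=
    fun t => pSS_ruled γ w I hIopen hs t hγd hwd hγ'd hw'd
  -- structural scalar facts at this s
  have hmWB : mink (w s) (deriv w s) = 0 := mink_self_deriv_zero w I hIopen hs δ hwd hwδ
  have hmWW : mink (w s) (w s) = δ := hwδ s hs
  have hmBB : mink (deriv w s) (deriv w s) = η := hwη s hs
  have hmAB : mink (deriv γ s) (deriv w s) = 0 := hstr s hs
  have hmBW : mink (deriv w s) (w s) = 0 := by
    unfold mink at hmWB ⊢; linarith
  -- abbreviations
  set A := deriv γ s with hA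
  set B := deriv w s with hB
  set W := w s with hW
  set Cc := deriv (deriv γ) s with hCc
  set D := deriv (deriv w) s with hD
  set d0 : ℝ := mink A A * mink W W - (mink A W)^2 with hd0
  set d1 : ℝ := 2*mink A B*mink W W - 2*mink A W*mink B W with hd1
  set d2 : ℝ := mink B B*mink W W - (mink B W)^2 with hd2
  set c0 : ℝ := -2*mink A W*det3 A W B + mink W W*det3 A W Cc - ε*(d0*det3 A W v) with hc0
  set c1 : ℝ := -2*mink B W*det3 A W B + mink W W*(det3 A W D + det3 B W Cc)
      - ε*(d0*det3 B W v + d1*det3 A W v) with hc1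
  set c2 : ℝ := mink W W*det3 B W D - ε*(d1*det3 B W v + d2*det3 A W v) with hc2
  set c3 : ℝ := -(ε*(d2*det3 B W v)) with hc3
  -- the cubic vanishes on J
  have hcubic : ∀ t ∈ J, c0 + c1*t + c2*t^2 + c3*t^3 = 0 := by
    intro t ht
    have heq := hsol s hs t ht
    have hd := hnd s hs t ht
    have habs : -|disc (fun s t => γ s + t • w s) s t|
        = ε * disc (fun s t => γ s + t • w s) s t := by
      rcases hε with rfl | rfl
      · rw [abs_of_neg (by linarith : disc (fun s t => γ s + t • w s) s t < 0)]; ring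
      · rw [abs_of_pos (by linarith : (0:ℝ) < disc (fun s t => γ s + t • w s) s t)]; ring
    unfold SolitonEqAt at heq
    rw [habs] at heq
    unfold disc coefE coefF coefG at heq
    rw [hpS t, hpT t, hpTT t, hpST t, hpSS t] at heq
    simp only [hc0, hc1, hc2, hc3, hd0, hd1, hd2]
    simp only [mink, det3, Pi.add_apply, Pi.smul_apply, smul_eq_mul, Pi.zero_apply] at heq ⊢
    linear_combination heq
  -- J is infinite
  have hJinf : J.Infinite := by
    obtain ⟨t0, ht0⟩ := hJne
    obtain ⟨r, hr, hball⟩ := Metric.isOpen_iff.mp hJopen t0 ht0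
    refine Set.Infinite.mono ?_ (Set.Ioo_infinite (by linarith : t0 - r < t0 + r))
    intro x hx
    apply hball
    rw [Metric.mem_ball, Real.dist_eq]
    exact abs_lt.mpr ⟨by linarith [hx.1], by linarith [hx.2]⟩
  -- polynomial argument: c3 = 0
  have hc3zero : c3 = 0 := by
    set p : Polynomial ℝ := Polynomial.C c0 + Polynomial.C c1 * Polynomial.X
        + Polynomial.C c2 * Polynomial.X^2 + Polynomial.C c3 * Polynomial.X^3 with hp
    have hroots : J ⊆ {x | p.IsRoot x} := by
      intro t ht
      simp only [Set.mem_setOf_eq, Polynomial.IsRoot.def, hp, Polynomial.eval_add,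
        Polynomial.eval_mul, Polynomial.eval_pow, Polynomial.eval_C, Polynomial.eval_X]
      exact hcubic t ht
    have hp0 : p = 0 := Polynomial.eq_zero_of_infinite_isRoot p (hJinf.mono hroots)
    have := congrArg (fun q : Polynomial ℝ => q.coeff 3) hp0
    simpa [hp, Polynomial.coeff_add, Polynomial.coeff_C_mul, Polynomial.coeff_X_pow,
      Polynomial.coeff_C, Polynomial.coeff_X] using this
  -- conclude det3 B W v = 0
  have hdBWv : det3 B W v = 0 := by
    rw [hc3, hd2, hmBB, hmWW, hmBW] at hc3zero
    rcases hε with rfl | rfl <;> rcases hη with rfl | rfl <;> rcases hδ with rfl | rfl <;>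
      (norm_num at hc3zero; linarith)
  have hdet : det3 W B v = 0 := by
    unfold det3 at hdBWv ⊢; linarith
  refine ⟨hdet, ?_⟩
  -- span part via the Lorentzian cross product L and Cramer's rule
  set L : Fin 3 → ℝ := fun i =>
    if i = 0 then W 1 * B 2 - W 2 * B 1
    else if i = 1 then W 2 * B 0 - W 0 * B 2
    else -(W 0 * B 1 - W 1 * B 0) with hL
  have hL0 : L 0 = W 1 * B 2 - W 2 * B 1 := by simp [hL]
  have hL1 : L 1 = W 2 * B 0 - W 0 * B 2 := by simp [hL]
  have hL2 : L 2 = -(W 0 * B 1 - W 1 * B 0) := by simp [hL]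
  have hdWBL : det3 W B L = (mink W B)^2 - mink W W * mink B B := by
    unfold det3 mink
    rw [hL0, hL1, hL2]
    ring
  have hmWB' : mink W B = 0 := hmWB
  have hdWBLval : det3 W B L = -(δ * η) := by
    rw [hdWBL, hmWB', hmWW, hmBB]; ring
  have hdne : det3 W B L ≠ 0 := by
    rw [hdWBLval]
    rcases hη with rfl | rfl <;> rcases hδ with rfl | rfl <;> norm_num
  have hcramer : ∀ i, det3 W B L * v i
      = det3 v B L * W i + det3 W v L * B i + det3 W B v * L i := by
    intro i
    fin_cases i <;>
      (simp only [Fin.zero_eta, Fin.mk_one, Fin.isValue,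
        show (⟨2, by norm_num⟩ : Fin 3) = 2 from rfl];
       unfold det3; rw [hL0, hL1, hL2]; ring)
  rw [Submodule.mem_span_pair]
  refine ⟨det3 v B L / det3 W B L, det3 W v L / det3 W B L, ?_⟩
  funext i
  have hci := hcramer i
  rw [hdet] at hci
  simp only [Pi.add_apply, Pi.smul_apply, smul_eq_mul]
  rw [div_mul_eq_mul_div, div_mul_eq_mul_div, ← add_div, div_eq_iff hdne]
  linear_combination -hci
end
end

section
/- (Theorem 4, case v = (0,1,1), ε = 1: explicit non-cylindrical ruled translating soliton.) Fix a, b ∈ ℝ and define, for s with 2s + a > 0: Φ(s) = (1/2)·log(2s + a), x(s) = (a/4)·log(2s + a) − s/2, z(s) = −((a² + 4)/16)·log(2s + a) + b·s − s²/8, and γ(s) = (x(s), z(s) + Φ(s), z(s)). Then X(s,t) = γ(s) + t·(1, s, s) satisfies ⟨γ'(s), (1,s,s)⟩ = 0, and at every point (s,t) with 2s + a > 0 and ⟨X_s, X_s⟩ < 0, X is non-degenerate with EG − F² = ⟨X_s,X_s⟩ < 0 and satisfies the translating soliton equation with respect to v = (0, 1, 1). -/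
noncomputable section

/-- First derivative of `x`. -/
def xd (a s : ℝ) : ℝ := a / 4 * (2 / (2 * s + a)) - 1 / 2

/-- First derivative of `Φ`. -/
def Phid (a s : ℝ) : ℝ := 1 / 2 * (2 / (2 * s + a))

/-- First derivative of `z`. -/
def zd (a b s : ℝ) : ℝ := -((a ^ 2 + 4) / 16) * (2 / (2 * s + a)) + b - s / 4

/-- Second derivative of `x`. -/
def xdd (a s : ℝ) : ℝ := -a / (2 * s + a) ^ 2

/-- Second derivative of `Φ`. -/
def Phidd (a s : ℝ) : ℝ := -2 / (2 * s + a) ^ 2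

/-- Second derivative of `z`. -/
def zdd (a s : ℝ) : ℝ := (a ^ 2 + 4) / (4 * (2 * s + a) ^ 2) - 1 / 4

lemma hasDerivAt_lin (a s : ℝ) : HasDerivAt (fun y : ℝ => 2 * y + a) 2 s := by
  simpa using ((hasDerivAt_id s).const_mul 2).add_const a

lemma hasDerivAt_log2 (a s : ℝ) (hs : 2 * s + a ≠ 0) :
    HasDerivAt (fun y => Real.log (2 * y + a)) (2 / (2 * s + a)) s := by
  have h := (Real.hasDerivAt_log hs).comp s (hasDerivAt_lin a s)
  exact h.congr_deriv (by ring)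

lemma hasDerivAt_inv2 (a s : ℝ) (hs : 2 * s + a ≠ 0) :
    HasDerivAt (fun y => 2 / (2 * y + a)) (-4 / (2 * s + a) ^ 2) s := by
  have h := ((hasDerivAt_lin a s).inv hs).const_mul 2
  exact h.congr_deriv (by ring)

lemma hasDerivAt_x (a s : ℝ) (hs : 2 * s + a ≠ 0) :
    HasDerivAt (fun y => a / 4 * Real.log (2 * y + a) - y / 2) (xd a s) s := by
  have h := ((hasDerivAt_log2 a s hs).const_mul (a / 4)).sub ((hasDerivAt_id s).div_const 2)
  exact h.congr_deriv (by unfold xd; ring)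

lemma hasDerivAt_Phi (a s : ℝ) (hs : 2 * s + a ≠ 0) :
    HasDerivAt (fun y => 1 / 2 * Real.log (2 * y + a)) (Phid a s) s :=
  (hasDerivAt_log2 a s hs).const_mul (1 / 2)

lemma hasDerivAt_z (a b s : ℝ) (hs : 2 * s + a ≠ 0) :
    HasDerivAt (fun y => -((a ^ 2 + 4) / 16) * Real.log (2 * y + a) + b * y - y ^ 2 / 8)
      (zd a b s) s := by
  have h := (((hasDerivAt_log2 a s hs).const_mul (-((a ^ 2 + 4) / 16))).add
    ((hasDerivAt_id s).const_mul b)).sub ((hasDerivAt_pow 2 s).div_const 8)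
  exact h.congr_deriv (by unfold zd; push_cast; ring)

lemma hasDerivAt_xd (a s : ℝ) (hs : 2 * s + a ≠ 0) :
    HasDerivAt (xd a) (xdd a s) s := by
  have h := ((hasDerivAt_inv2 a s hs).const_mul (a / 4)).sub_const (1 / 2)
  exact h.congr_deriv (by unfold xdd; ring)

lemma hasDerivAt_Phid (a s : ℝ) (hs : 2 * s + a ≠ 0) :
    HasDerivAt (Phid a) (Phidd a s) s := by
  have h := (hasDerivAt_inv2 a s hs).const_mul (1 / 2)
  exact h.congr_deriv (by unfold Phidd; ring)

lemma hasDerivAt_zd (a b s : ℝ) (hs : 2 * s + a ≠ 0) :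
    HasDerivAt (zd a b) (zdd a s) s := by
  have h := (((hasDerivAt_inv2 a s hs).const_mul (-((a ^ 2 + 4) / 16))).add_const b).sub
    ((hasDerivAt_id s).div_const 4)
  exact h.congr_deriv (by unfold zdd; field_simp; ring)

set_option maxHeartbeats 1000000 in
/-- Theorem 4, case `v = (0,1,1)`, `ε = 1`: with
`Φ(s) = (1/2)log(2s+a)`, `x(s) = (a/4)log(2s+a) − s/2`,
`z(s) = −((a²+4)/16)log(2s+a) + bs − s²/8` and `γ = (x, z+Φ, z)`, the ruled surface
`X(s,t) = γ(s) + t(1,s,s)` satisfies `⟨γ',(1,s,s)⟩ = 0`, and at every `(s,t)` with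
`2s+a > 0` and `E = ⟨X_s,X_s⟩ < 0` it is non-degenerate with `EG − F² = E < 0` and
satisfies the translating soliton equation with respect to `v = (0,1,1)`. -/
theorem stmt15 (a b : ℝ) (Φ x z : ℝ → ℝ) (γ : ℝ → Fin 3 → ℝ)
    (hΦ : Φ = fun s => (1 / 2) * Real.log (2 * s + a))
    (hx : x = fun s => (a / 4) * Real.log (2 * s + a) - s / 2)
    (hz : z = fun s =>
      -((a ^ 2 + 4) / 16) * Real.log (2 * s + a) + b * s - s ^ 2 / 8)
    (hγ : γ = fun s => ![x s, z s + Φ s, z s]) :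
    (∀ s : ℝ, 0 < 2 * s + a → mink (deriv γ s) ![1, s, s] = 0) ∧
    (∀ s t : ℝ, 0 < 2 * s + a →
      coefE (fun s t => γ s + t • ![1, s, s]) s t < 0 →
        disc (fun s t => γ s + t • ![1, s, s]) s t
            = coefE (fun s t => γ s + t • ![1, s, s]) s t ∧
        disc (fun s t => γ s + t • ![1, s, s]) s t < 0 ∧
        SolitonEqAt (fun s t => γ s + t • ![1, s, s]) ![0, 1, 1] s t) := by
  have hgd : ∀ s : ℝ, 2 * s + a ≠ 0 →
      HasDerivAt γ ![xd a s, zd a b s + Phid a s, zd a b s] s := by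
    intro s hs
    rw [hγ]
    refine hasDerivAt_pi.mpr fun i => ?_
    fin_cases i
    · show HasDerivAt (fun y => x y) (xd a s) s
      rw [hx]; exact hasDerivAt_x a s hs
    · show HasDerivAt (fun y => z y + Φ y) (zd a b s + Phid a s) s
      rw [hz, hΦ]; exact (hasDerivAt_z a b s hs).add (hasDerivAt_Phi a s hs)
    · show HasDerivAt (fun y => z y) (zd a b s) s
      rw [hz]; exact hasDerivAt_z a b s hs
  constructor
  · intro s hs
    have hu : 2 * s + a ≠ 0 := ne_of_gt hs
    rw [(hgd s hu).deriv]
    show xd a s * 1 + (zd a b s + Phid a s) * s - zd a b s * s = 0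
    unfold xd Phid zd
    field_simp
    ring
  · intro s t hs hE
    have hu : 2 * s + a ≠ 0 := ne_of_gt hs
    set X : ℝ → ℝ → Fin 3 → ℝ := fun s t => γ s + t • ![1, s, s] with hX
    have hXs : ∀ y : ℝ, 2 * y + a ≠ 0 → pS X y t =
        ![xd a y, zd a b y + Phid a y, zd a b y] + t • ![0, 1, 1] := by
      intro y hy
      have hr : HasDerivAt (fun y : ℝ => t • ![(1 : ℝ), y, y]) (t • ![(0 : ℝ), 1, 1]) y := by
        refine hasDerivAt_pi.mpr fun i => ?_
        fin_cases i
        · show HasDerivAt (fun _ : ℝ => t * 1) (t * 0) y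
          simpa using hasDerivAt_const y (t * 1)
        · show HasDerivAt (fun y : ℝ => t * y) (t * 1) y
          exact (hasDerivAt_id y).const_mul t
        · show HasDerivAt (fun y : ℝ => t * y) (t * 1) y
          exact (hasDerivAt_id y).const_mul t
      exact ((hgd y hy).add hr).deriv
    have hpT : ∀ y u : ℝ, pT X y u = ![1, y, y] := by
      intro y u
      have h : HasDerivAt (fun c : ℝ => γ y + c • ![(1 : ℝ), y, y])
          ((1 : ℝ) • ![(1 : ℝ), y, y]) u := ((hasDerivAt_id u).smul_const _).const_add _
      have h2 := h.deriv
      rw [one_smul] at h2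
      exact h2
    have hpTT : pTT X s t = 0 := by
      have h : (fun c => pT X s c) = fun _ => ![(1 : ℝ), s, s] := funext fun c => hpT s c
      unfold pTT
      rw [h, deriv_const]
    have hpST : pST X s t = ![0, 1, 1] := by
      have h : (fun y => pT X y t) = fun y => ![(1 : ℝ), y, y] := funext fun y => hpT y t
      unfold pST
      rw [h]
      apply HasDerivAt.deriv
      refine hasDerivAt_pi.mpr fun i => ?_
      fin_cases i
      · show HasDerivAt (fun _ : ℝ => (1 : ℝ)) 0 s
        exact hasDerivAt_const s 1
      · show HasDerivAt (fun y : ℝ => y) 1 s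
        exact hasDerivAt_id s
      · show HasDerivAt (fun y : ℝ => y) 1 s
        exact hasDerivAt_id s
    have hpSS : pSS X s t = ![xdd a s, zdd a s + Phidd a s, zdd a s] := by
      have hev : (fun y => pS X y t) =ᶠ[nhds s]
          (fun y => ![xd a y, zd a b y + Phid a y, zd a b y] + t • ![0, 1, 1]) := by
        have hopen : ∀ᶠ y in nhds s, 0 < 2 * y + a := by
          have hc : Continuous fun y : ℝ => 2 * y + a := by continuity
          have ho := (isOpen_Ioi (a := (0 : ℝ))).preimage hc
          exact (ho.eventually_mem (by simpa using hs)).mono fun y hy => by simpa using hy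
        exact hopen.mono fun y hy => hXs y (ne_of_gt hy)
      unfold pSS
      rw [hev.deriv_eq]
      have h1 : HasDerivAt (fun y => ![xd a y, zd a b y + Phid a y, zd a b y])
          ![xdd a s, zdd a s + Phidd a s, zdd a s] s := by
        refine hasDerivAt_pi.mpr fun i => ?_
        fin_cases i
        · show HasDerivAt (fun y => xd a y) (xdd a s) s
          exact hasDerivAt_xd a s hu
        · show HasDerivAt (fun y => zd a b y + Phid a y) (zdd a s + Phidd a s) s
          exact (hasDerivAt_zd a b s hu).add (hasDerivAt_Phid a s hu)
        · show HasDerivAt (fun y => zd a b y) (zdd a s) s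
          exact hasDerivAt_zd a b s hu
      exact (h1.add_const (t • ![(0 : ℝ), 1, 1])).deriv
    have hF : coefF X s t = 0 := by
      unfold coefF mink
      rw [hXs s hu, hpT s t]
      show (xd a s + t * 0) * 1 + (zd a b s + Phid a s + t * 1) * s
          - (zd a b s + t * 1) * s = 0
      unfold xd Phid zd
      field_simp
      ring
    have hG : coefG X s t = 1 := by
      unfold coefG mink
      rw [hpT s t]
      show (1 : ℝ) * 1 + s * s - s * s = 1
      ring
    have hdisc : disc X s t = coefE X s t := by
      unfold disc
      rw [hF, hG]
      ring
    refine ⟨hdisc, hdisc ▸ hE, ?_⟩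
    unfold SolitonEqAt
    rw [hdisc, abs_of_neg hE, hF, hG, hpTT, hpST, hpSS, hXs s hu, hpT s t]
    unfold coefE mink det3
    rw [hXs s hu]
    simp only [Pi.add_apply, Pi.smul_apply, smul_eq_mul, Pi.zero_apply, Matrix.cons_val_zero,
      Matrix.cons_val_one, Matrix.head_cons, Matrix.cons_val_two, Matrix.tail_cons]
    unfold xd xdd Phid Phidd zd zdd
    field_simp
    ring
end
end

section
/- (Theorem 4, case v = (1,v₂,v₂), ε = 1, Φ = 1/(s−v₂): explicit non-cylindrical ruled translating soliton.) Fix v₂, b ∈ ℝ and define, for s > v₂: Φ(s) = 1/(s − v₂), x(s) = log(s − v₂) − v₂/(s − v₂), z(s) = v₂·log(s − v₂) − (1 + v₂²)/(2(s − v₂)) + b·s, and γ(s) = (x(s), z(s) + Φ(s), z(s)). Then X(s,t) = γ(s) + t·(1, s, s) satisfies ⟨γ'(s), (1,s,s)⟩ = 0, and at every point (s,t) with s > v₂ and ⟨X_s, X_s⟩ < 0, X is non-degenerate with EG − F² = ⟨X_s,X_s⟩ < 0 and satisfies the translating soliton equation with respect to v = (1, v₂, v₂). -/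
noncomputable section

lemma hda_x (v₂ : ℝ) {a : ℝ} (h : a ≠ v₂) :
    HasDerivAt (fun u => Real.log (u - v₂) - v₂ / (u - v₂)) (a / (a - v₂)^2) a := by
  have h0 : a - v₂ ≠ 0 := sub_ne_zero.2 h
  have h1 : HasDerivAt (fun u : ℝ => u - v₂) 1 a := (hasDerivAt_id a).sub_const v₂
  have hlog : HasDerivAt (fun u => Real.log (u - v₂)) ((a - v₂)⁻¹ * 1) a :=
    by have := (Real.hasDerivAt_log h0).comp a h1; exact this
  have hdiv : HasDerivAt (fun u => v₂ / (u - v₂)) ((0 * (a - v₂) - v₂ * 1)/(a - v₂)^2) a :=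
    (hasDerivAt_const a v₂).div h1 h0
  refine (hlog.sub hdiv).congr_deriv ?_
  field_simp; ring

lemma hda_z (v₂ b : ℝ) {a : ℝ} (h : a ≠ v₂) :
    HasDerivAt (fun u => v₂ * Real.log (u - v₂) - (1 + v₂ ^ 2) / (2 * (u - v₂)) + b * u)
      (v₂ / (a - v₂) + (1 + v₂^2) / (2 * (a - v₂)^2) + b) a := by
  have h0 : a - v₂ ≠ 0 := sub_ne_zero.2 h
  have h1 : HasDerivAt (fun u : ℝ => u - v₂) 1 a := (hasDerivAt_id a).sub_const v₂
  have hlog : HasDerivAt (fun u => v₂ * Real.log (u - v₂)) (v₂ * ((a - v₂)⁻¹ * 1)) a :=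
    by have := ((Real.hasDerivAt_log h0).comp a h1).const_mul v₂; exact this
  have h2 : HasDerivAt (fun u : ℝ => 2 * (u - v₂)) (2 * 1) a := h1.const_mul 2
  have h20 : 2 * (a - v₂) ≠ 0 := mul_ne_zero two_ne_zero h0
  have hdiv : HasDerivAt (fun u => (1 + v₂ ^ 2) / (2 * (u - v₂)))
      ((0 * (2 * (a - v₂)) - (1 + v₂ ^ 2) * (2 * 1)) / (2 * (a - v₂))^2) a :=
    (hasDerivAt_const a _).div h2 h20
  have hb : HasDerivAt (fun u : ℝ => b * u) (b * 1) a := (hasDerivAt_id a).const_mul b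
  refine ((hlog.sub hdiv).add hb).congr_deriv ?_
  field_simp; ring

lemma hda_Φ (v₂ : ℝ) {a : ℝ} (h : a ≠ v₂) :
    HasDerivAt (fun u => 1 / (u - v₂)) (-(1 / (a - v₂)^2)) a := by
  have h0 : a - v₂ ≠ 0 := sub_ne_zero.2 h
  have h1 : HasDerivAt (fun u : ℝ => u - v₂) 1 a := (hasDerivAt_id a).sub_const v₂
  refine ((hasDerivAt_const a (1:ℝ)).div h1 h0).congr_deriv ?_
  field_simp; ring

lemma hda_x' (v₂ : ℝ) {a : ℝ} (h : a ≠ v₂) :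
    HasDerivAt (fun u => u / (u - v₂)^2) (-(a + v₂) / (a - v₂)^3) a := by
  have h0 : a - v₂ ≠ 0 := sub_ne_zero.2 h
  have h1 : HasDerivAt (fun u : ℝ => u - v₂) 1 a := (hasDerivAt_id a).sub_const v₂
  have h2 : HasDerivAt (fun u : ℝ => (u - v₂)^2) (2 * (a - v₂)^1 * 1) a := h1.pow 2
  have h20 : (a - v₂)^2 ≠ 0 := pow_ne_zero _ h0
  refine ((hasDerivAt_id a).div h2 h20).congr_deriv ?_
  simp only [id_eq]; field_simp; ring

lemma hda_z' (v₂ b : ℝ) {a : ℝ} (h : a ≠ v₂) :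
    HasDerivAt (fun u => v₂ / (u - v₂) + (1 + v₂^2) / (2 * (u - v₂)^2) + b)
      (-(v₂ * a + 1) / (a - v₂)^3) a := by
  have h0 : a - v₂ ≠ 0 := sub_ne_zero.2 h
  have h1 : HasDerivAt (fun u : ℝ => u - v₂) 1 a := (hasDerivAt_id a).sub_const v₂
  have hd1 : HasDerivAt (fun u => v₂ / (u - v₂))
      ((0 * (a - v₂) - v₂ * 1) / (a - v₂)^2) a := (hasDerivAt_const a v₂).div h1 h0
  have h2 : HasDerivAt (fun u : ℝ => 2 * (u - v₂)^2) (2 * (2 * (a - v₂)^1 * 1)) a :=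
    (h1.pow 2).const_mul 2
  have h20 : 2 * (a - v₂)^2 ≠ 0 := by simp [pow_ne_zero, h0]
  have hd2 : HasDerivAt (fun u => (1 + v₂^2) / (2 * (u - v₂)^2))
      ((0 * (2 * (a - v₂)^2) - (1 + v₂^2) * (2 * (2 * (a - v₂)^1 * 1))) / (2 * (a - v₂)^2)^2) a :=
    (hasDerivAt_const a _).div h2 h20
  refine ((hd1.add hd2).add_const b).congr_deriv ?_
  field_simp; ring

lemma hda_Φ' (v₂ : ℝ) {a : ℝ} (h : a ≠ v₂) :
    HasDerivAt (fun u => -(1 / (u - v₂)^2)) (2 / (a - v₂)^3) a := by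
  have h0 : a - v₂ ≠ 0 := sub_ne_zero.2 h
  have h1 : HasDerivAt (fun u : ℝ => u - v₂) 1 a := (hasDerivAt_id a).sub_const v₂
  have h2 : HasDerivAt (fun u : ℝ => (u - v₂)^2) (2 * (a - v₂)^1 * 1) a := h1.pow 2
  have h20 : (a - v₂)^2 ≠ 0 := pow_ne_zero _ h0
  refine (((hasDerivAt_const a (1:ℝ)).div h2 h20).neg).congr_deriv ?_
  field_simp; ring

lemma hda_line (c w : Fin 3 → ℝ) (u : ℝ) : HasDerivAt (fun t : ℝ => c + t • w) w u := by
  simpa using ((hasDerivAt_id u).smul_const w).const_add c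

set_option maxHeartbeats 2000000 in
/-- Theorem 4, case `v = (1,v₂,v₂)`, `ε = 1`, `Φ = 1/(s−v₂)`: with
`Φ(s) = 1/(s−v₂)`, `x(s) = log(s−v₂) − v₂/(s−v₂)`,
`z(s) = v₂·log(s−v₂) − (1+v₂²)/(2(s−v₂)) + bs` and `γ = (x, z+Φ, z)`, the ruled surface
`X(s,t) = γ(s) + t(1,s,s)` satisfies `⟨γ',(1,s,s)⟩ = 0`, and at every `(s,t)` with
`s > v₂` and `E = ⟨X_s,X_s⟩ < 0` it is non-degenerate with `EG − F² = E < 0` and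
satisfies the translating soliton equation with respect to `v = (1,v₂,v₂)`. -/
theorem stmt16 (v₂ b : ℝ) (Φ x z : ℝ → ℝ) (γ : ℝ → Fin 3 → ℝ)
    (hΦ : Φ = fun s => 1 / (s - v₂))
    (hx : x = fun s => Real.log (s - v₂) - v₂ / (s - v₂))
    (hz : z = fun s =>
      v₂ * Real.log (s - v₂) - (1 + v₂ ^ 2) / (2 * (s - v₂)) + b * s)
    (hγ : γ = fun s => ![x s, z s + Φ s, z s]) :
    (∀ s : ℝ, v₂ < s → mink (deriv γ s) ![1, s, s] = 0) ∧
    (∀ s t : ℝ, v₂ < s →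
      coefE (fun s t => γ s + t • ![1, s, s]) s t < 0 →
        disc (fun s t => γ s + t • ![1, s, s]) s t
            = coefE (fun s t => γ s + t • ![1, s, s]) s t ∧
        disc (fun s t => γ s + t • ![1, s, s]) s t < 0 ∧
        SolitonEqAt (fun s t => γ s + t • ![1, s, s]) ![1, v₂, v₂] s t) := by
  subst hΦ hx hz hγ
  have hγd : ∀ a : ℝ, a ≠ v₂ →
      HasDerivAt (fun s => ![Real.log (s - v₂) - v₂ / (s - v₂),
        (v₂ * Real.log (s - v₂) - (1 + v₂ ^ 2) / (2 * (s - v₂)) + b * s) + 1 / (s - v₂),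
        v₂ * Real.log (s - v₂) - (1 + v₂ ^ 2) / (2 * (s - v₂)) + b * s])
      ![a / (a - v₂)^2, (v₂ / (a - v₂) + (1 + v₂^2) / (2 * (a - v₂)^2) + b) + (-(1 / (a - v₂)^2)), (v₂ / (a - v₂) + (1 + v₂^2) / (2 * (a - v₂)^2) + b)] a := by
    intro a ha
    rw [hasDerivAt_pi]
    intro i
    fin_cases i
    · simpa using hda_x v₂ ha
    · simpa [Pi.add_def] using (hda_z v₂ b ha).add (hda_Φ v₂ ha)
    · simpa using hda_z v₂ b ha
  constructor
  · intro s hs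
    have h0 : s - v₂ ≠ 0 := sub_ne_zero.2 hs.ne'
    rw [(hγd s hs.ne').deriv]
    simp only [mink, Matrix.cons_val_zero, Matrix.cons_val_one,
      Matrix.head_cons, Matrix.cons_val_two, Matrix.tail_cons]
    field_simp
    ring
  · intro s t hs hE
    have hne : s ≠ v₂ := hs.ne'
    have h0 : s - v₂ ≠ 0 := sub_ne_zero.2 hne
    set X : ℝ → ℝ → Fin 3 → ℝ := fun s t => (fun s => ![Real.log (s - v₂) - v₂ / (s - v₂),
        (v₂ * Real.log (s - v₂) - (1 + v₂ ^ 2) / (2 * (s - v₂)) + b * s) + 1 / (s - v₂),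
        v₂ * Real.log (s - v₂) - (1 + v₂ ^ 2) / (2 * (s - v₂)) + b * s]) s + t • ![1, s, s]
      with hXdef
    have hpT : ∀ a u : ℝ, pT X a u = ![1, a, a] := by
      intro a u
      exact (hda_line _ ![1, a, a] u).deriv
    have hpTT : pTT X s t = 0 := by
      have h1 : (fun u => pT X s u) = fun _ => ![1, s, s] := funext (hpT s)
      rw [pTT, h1, deriv_const]
    have hpST : pST X s t = ![0, 1, 1] := by
      have h1 : (fun a => pT X a t) = fun a => ![1, a, a] := funext fun a => hpT a t
      rw [pST, h1]
      refine HasDerivAt.deriv ?_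
      rw [hasDerivAt_pi]
      intro i
      fin_cases i
      · simpa using hasDerivAt_const s (1:ℝ)
      · simpa using hasDerivAt_id' (x := s)
      · simpa using hasDerivAt_id' (x := s)
    have hpSf : ∀ a : ℝ, a ≠ v₂ →
        pS X a t = ![a / (a - v₂)^2, (v₂ / (a - v₂) + (1 + v₂^2) / (2 * (a - v₂)^2) + b) + (-(1 / (a - v₂)^2)) + t, (v₂ / (a - v₂) + (1 + v₂^2) / (2 * (a - v₂)^2) + b) + t] := by
      intro a ha
      have h2 : HasDerivAt (fun a : ℝ => t • ![(1:ℝ), a, a]) (t • ![(0:ℝ), 1, 1]) a := by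
        rw [hasDerivAt_pi]
        intro i
        fin_cases i
        · simpa using hasDerivAt_const a (t * 1)
        · simpa [Pi.smul_apply] using (hasDerivAt_id a).const_mul t
        · simpa [Pi.smul_apply] using (hasDerivAt_id a).const_mul t
      have h1 := (hγd a ha).add h2
      have h3 : (![a / (a - v₂)^2, (v₂ / (a - v₂) + (1 + v₂^2) / (2 * (a - v₂)^2) + b) + (-(1 / (a - v₂)^2)), (v₂ / (a - v₂) + (1 + v₂^2) / (2 * (a - v₂)^2) + b)] + t • ![(0:ℝ), 1, 1])
          = ![a / (a - v₂)^2, (v₂ / (a - v₂) + (1 + v₂^2) / (2 * (a - v₂)^2) + b) + (-(1 / (a - v₂)^2)) + t, (v₂ / (a - v₂) + (1 + v₂^2) / (2 * (a - v₂)^2) + b) + t] := by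
        funext i
        fin_cases i <;> simp
      rw [pS, ← h3]
      exact h1.deriv
    have hpS := hpSf s hne
    have hpSS : pSS X s t = ![(-(s + v₂) / (s - v₂)^3),
        (-(v₂ * s + 1) / (s - v₂)^3) + (2 / (s - v₂)^3), (-(v₂ * s + 1) / (s - v₂)^3)] := by
      rw [pSS]
      have hev : (fun a => pS X a t)
          =ᶠ[nhds s] fun a => ![a / (a - v₂)^2, (v₂ / (a - v₂) + (1 + v₂^2) / (2 * (a - v₂)^2) + b) + (-(1 / (a - v₂)^2)) + t, (v₂ / (a - v₂) + (1 + v₂^2) / (2 * (a - v₂)^2) + b) + t] := by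
        filter_upwards [IsOpen.mem_nhds (isOpen_lt continuous_const continuous_id) hs]
          with a ha
        exact hpSf a (ne_of_gt ha)
      rw [hev.deriv_eq]
      refine HasDerivAt.deriv ?_
      rw [hasDerivAt_pi]
      intro i
      fin_cases i
      · simpa using hda_x' v₂ hne
      · simpa using ((hda_z' v₂ b hne).add (hda_Φ' v₂ hne)).add_const t
      · simpa using (hda_z' v₂ b hne).add_const t
    have hFeq : coefF X s t = 0 := by
      rw [coefF, hpS, hpT]
      simp only [mink, Matrix.cons_val_zero, Matrix.cons_val_one,
        Matrix.head_cons, Matrix.cons_val_two, Matrix.tail_cons]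
      field_simp
      ring
    have hGeq : coefG X s t = 1 := by
      rw [coefG, hpT]
      simp only [mink, Matrix.cons_val_zero, Matrix.cons_val_one,
        Matrix.head_cons, Matrix.cons_val_two, Matrix.tail_cons]
      ring
    have hdisc : disc X s t = coefE X s t := by
      rw [disc, hFeq, hGeq]; ring
    refine ⟨hdisc, by rw [hdisc]; exact hE, ?_⟩
    rw [SolitonEqAt, hdisc, abs_of_neg hE, hFeq, hGeq, hpS, hpT, hpSS, hpST, hpTT,
      coefE, hpS]
    simp only [mink, det3, Matrix.cons_val_zero, Matrix.cons_val_one,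
      Matrix.head_cons, Matrix.cons_val_two, Matrix.tail_cons, Pi.zero_apply, neg_neg]
    field_simp
    ring
end
end

section
/- (Theorem 4, case v = (1,v₂,v₂), ε = −1, arctan branch with a = −1, p = 1: explicit non-cylindrical ruled translating soliton.) Fix v₂, b ∈ ℝ, write φ(s) = s − v₂, and define for s ∈ ℝ: Φ(s) = arctan(φ(s)), x(s) = −(1/2)·log(1 + φ(s)²) − v₂·arctan(φ(s)), z(s) = −(v₂²/2)·arctan(φ(s)) − (v₂/2)·log(1 + φ(s)²) + b·s, and γ(s) = (x(s), z(s) + Φ(s), z(s)). Then X(s,t) = γ(s) + t·(1, s, s) satisfies ⟨γ'(s), (1,s,s)⟩ = 0, and at every point (s,t) with ⟨X_s, X_s⟩ > 0, X is non-degenerate with EG − F² = ⟨X_s,X_s⟩ > 0 and satisfies the translating soliton equation with respect to v = (1, v₂, v₂). -/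
noncomputable section

def st17pd (v₂ s : ℝ) : ℝ := 1 / (1 + (s - v₂) ^ 2)
def st17ld (v₂ s : ℝ) : ℝ := 2 * (s - v₂) / (1 + (s - v₂) ^ 2)
def st17xd (v₂ s : ℝ) : ℝ := -(1/2) * st17ld v₂ s - v₂ * st17pd v₂ s
def st17zd (v₂ b s : ℝ) : ℝ := -(v₂^2/2) * st17pd v₂ s - (v₂/2) * st17ld v₂ s + b
def st17pdd (v₂ s : ℝ) : ℝ := -(2 * (s - v₂)) / (1 + (s - v₂) ^ 2) ^ 2
def st17ldd (v₂ s : ℝ) : ℝ :=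
  (2 * (1 + (s - v₂) ^ 2) - 2 * (s - v₂) * (2 * (s - v₂))) / (1 + (s - v₂) ^ 2) ^ 2
def st17xdd (v₂ s : ℝ) : ℝ := -(1/2) * st17ldd v₂ s - v₂ * st17pdd v₂ s
def st17zdd (v₂ b s : ℝ) : ℝ := -(v₂^2/2) * st17pdd v₂ s - (v₂/2) * st17ldd v₂ s

lemma st17_hD (v₂ s : ℝ) : (0:ℝ) < 1 + (s - v₂) ^ 2 := by positivity

lemma st17_hg (v₂ s : ℝ) : HasDerivAt (fun a => 1 + (a - v₂) ^ 2) (2 * (s - v₂)) s := by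
  have h := (((hasDerivAt_id s).sub_const v₂).pow 2).const_add 1
  exact h.congr_deriv (by simp)

lemma st17_hpd (v₂ s : ℝ) :
    HasDerivAt (fun a => 1 / (1 + (a - v₂) ^ 2)) (st17pdd v₂ s) s := by
  have h := (hasDerivAt_const s (1:ℝ)).div (st17_hg v₂ s) (st17_hD v₂ s).ne'
  exact h.congr_deriv (by unfold st17pdd; ring)

lemma st17_hld (v₂ s : ℝ) :
    HasDerivAt (fun a => 2 * (a - v₂) / (1 + (a - v₂) ^ 2)) (st17ldd v₂ s) s := by
  have hnum : HasDerivAt (fun a : ℝ => 2 * (a - v₂)) 2 s := by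
    have h := ((hasDerivAt_id s).sub_const v₂).const_mul 2
    exact h.congr_deriv (by simp)
  have h := hnum.div (st17_hg v₂ s) (st17_hD v₂ s).ne'
  exact h

lemma st17_hP (v₂ s : ℝ) :
    HasDerivAt (fun a => Real.arctan (a - v₂)) (st17pd v₂ s) s := by
  have h := (Real.hasDerivAt_arctan (s - v₂)).comp s ((hasDerivAt_id s).sub_const v₂)
  exact h.congr_deriv (by unfold st17pd; ring)

lemma st17_hL (v₂ s : ℝ) :
    HasDerivAt (fun a => Real.log (1 + (a - v₂) ^ 2)) (st17ld v₂ s) s := by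
  have h := (Real.hasDerivAt_log (st17_hD v₂ s).ne').comp s (st17_hg v₂ s)
  exact h.congr_deriv (by unfold st17ld; ring)

lemma st17_hx (v₂ s : ℝ) :
    HasDerivAt (fun a => -(1/2) * Real.log (1 + (a - v₂) ^ 2) - v₂ * Real.arctan (a - v₂))
      (st17xd v₂ s) s :=
  ((st17_hL v₂ s).const_mul (-(1/2))).sub ((st17_hP v₂ s).const_mul v₂)

lemma st17_hz (v₂ b s : ℝ) :
    HasDerivAt (fun a => -(v₂^2/2) * Real.arctan (a - v₂)
      - (v₂/2) * Real.log (1 + (a - v₂) ^ 2) + b * a) (st17zd v₂ b s) s := by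
  have h := (((st17_hP v₂ s).const_mul (-(v₂^2/2))).sub
    ((st17_hL v₂ s).const_mul (v₂/2))).add ((hasDerivAt_id s).const_mul b)
  exact h.congr_deriv (by unfold st17zd; simp)

lemma st17_hxd (v₂ s : ℝ) : HasDerivAt (fun a => st17xd v₂ a) (st17xdd v₂ s) s := by
  unfold st17xd st17xdd
  exact ((st17_hld v₂ s).const_mul (-(1/2))).sub ((st17_hpd v₂ s).const_mul v₂)

lemma st17_hzd (v₂ b s : ℝ) : HasDerivAt (fun a => st17zd v₂ b a) (st17zdd v₂ b s) s := by
  unfold st17zd st17zdd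
  exact (((st17_hpd v₂ s).const_mul (-(v₂^2/2))).sub
    ((st17_hld v₂ s).const_mul (v₂/2))).add_const b

set_option maxHeartbeats 2000000 in
lemma st17_alg (v₂ b s t : ℝ) :
    det3 ![st17xd v₂ s, st17zd v₂ b s + st17pd v₂ s + t, st17zd v₂ b s + t] ![1, s, s]
        ![st17xdd v₂ s, st17zdd v₂ b s + st17pdd v₂ s, st17zdd v₂ b s]
      = -(mink ![st17xd v₂ s, st17zd v₂ b s + st17pd v₂ s + t, st17zd v₂ b s + t]
          ![st17xd v₂ s, st17zd v₂ b s + st17pd v₂ s + t, st17zd v₂ b s + t])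
        * det3 ![st17xd v₂ s, st17zd v₂ b s + st17pd v₂ s + t, st17zd v₂ b s + t]
            ![1, s, s] ![1, v₂, v₂] := by
  simp only [mink, det3, Matrix.cons_val_zero, Matrix.cons_val_one, Matrix.head_cons,
    Matrix.cons_val_two, Matrix.tail_cons]
  unfold st17xdd st17zdd st17xd st17zd st17pdd st17ldd st17pd st17ld
  have hD : (1 + (s - v₂) ^ 2) ≠ 0 := by positivity
  obtain ⟨D, hD0, hDeq⟩ : ∃ D : ℝ, D ≠ 0 ∧ 1 + (s - v₂) ^ 2 = D := ⟨_, hD, rfl⟩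
  rw [hDeq]
  have hP : 1 / D * (s - v₂) ^ 2 = 1 - 1 / D := by
    rw [← hDeq]; field_simp; ring
  have h1 : D * D⁻¹ = 1 := mul_inv_cancel₀ hD0
  linear_combination ((s - v₂) * (1 / D) ^ 2) * hP + ((v₂ - s) * (1 / D) ^ 2) * h1

/-- Theorem 4, case `v = (1,v₂,v₂)`, `ε = −1`, arctan branch, `a = −1`,
`p = 1`: with `φ(s) = s − v₂`, `Φ(s) = arctan φ`, `x(s) = −(1/2)log(1+φ²) − v₂·arctan φ`,
`z(s) = −(v₂²/2)arctan φ − (v₂/2)log(1+φ²) + bs` and `γ = (x, z+Φ, z)`, the ruled surface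
`X(s,t) = γ(s) + t(1,s,s)` satisfies `⟨γ',(1,s,s)⟩ = 0`, and at every `(s,t)` with
`E = ⟨X_s,X_s⟩ > 0` it is non-degenerate with `EG − F² = E > 0` and satisfies the
translating soliton equation with respect to `v = (1,v₂,v₂)`. -/
theorem stmt17 (v₂ b : ℝ) (Φ x z : ℝ → ℝ) (γ : ℝ → Fin 3 → ℝ)
    (hΦ : Φ = fun s => Real.arctan (s - v₂))
    (hx : x = fun s =>
      -(1 / 2) * Real.log (1 + (s - v₂) ^ 2) - v₂ * Real.arctan (s - v₂))
    (hz : z = fun s =>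
      -(v₂ ^ 2 / 2) * Real.arctan (s - v₂)
        - (v₂ / 2) * Real.log (1 + (s - v₂) ^ 2) + b * s)
    (hγ : γ = fun s => ![x s, z s + Φ s, z s]) :
    (∀ s : ℝ, mink (deriv γ s) ![1, s, s] = 0) ∧
    (∀ s t : ℝ,
      0 < coefE (fun s t => γ s + t • ![1, s, s]) s t →
        disc (fun s t => γ s + t • ![1, s, s]) s t
            = coefE (fun s t => γ s + t • ![1, s, s]) s t ∧
        0 < disc (fun s t => γ s + t • ![1, s, s]) s t ∧
        SolitonEqAt (fun s t => γ s + t • ![1, s, s]) ![1, v₂, v₂] s t) := by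
  subst hΦ hx hz hγ
  beta_reduce
  -- derivative of γ
  have hγd : ∀ s : ℝ, HasDerivAt
      (fun a : ℝ => (![-(1 / 2) * Real.log (1 + (a - v₂) ^ 2) - v₂ * Real.arctan (a - v₂),
        (-(v₂ ^ 2 / 2) * Real.arctan (a - v₂) - (v₂ / 2) * Real.log (1 + (a - v₂) ^ 2) + b * a)
          + Real.arctan (a - v₂),
        -(v₂ ^ 2 / 2) * Real.arctan (a - v₂) - (v₂ / 2) * Real.log (1 + (a - v₂) ^ 2) + b * a] :
        Fin 3 → ℝ))
      ![st17xd v₂ s, st17zd v₂ b s + st17pd v₂ s, st17zd v₂ b s] s := by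
    intro s
    rw [hasDerivAt_pi]
    intro i
    fin_cases i
    · simpa using st17_hx v₂ s
    · simpa [Pi.add_def] using (st17_hz v₂ b s).add (st17_hP v₂ s)
    · simpa using st17_hz v₂ b s
  have hXs : ∀ s t : ℝ, HasDerivAt
      (fun a : ℝ => (![-(1 / 2) * Real.log (1 + (a - v₂) ^ 2) - v₂ * Real.arctan (a - v₂),
        (-(v₂ ^ 2 / 2) * Real.arctan (a - v₂) - (v₂ / 2) * Real.log (1 + (a - v₂) ^ 2) + b * a)
          + Real.arctan (a - v₂),
        -(v₂ ^ 2 / 2) * Real.arctan (a - v₂) - (v₂ / 2) * Real.log (1 + (a - v₂) ^ 2) + b * a] :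
        Fin 3 → ℝ) + t • ![1, a, a])
      ![st17xd v₂ s, st17zd v₂ b s + st17pd v₂ s + t, st17zd v₂ b s + t] s := by
    intro s t
    rw [hasDerivAt_pi]
    intro i
    fin_cases i
    · simpa using (st17_hx v₂ s).add_const t
    · simpa [Pi.add_def] using ((st17_hz v₂ b s).add (st17_hP v₂ s)).add ((hasDerivAt_id s).const_mul t)
    · simpa [Pi.add_def] using (st17_hz v₂ b s).add ((hasDerivAt_id s).const_mul t)
  have hXt : ∀ s t : ℝ, HasDerivAt
      (fun u : ℝ => (![-(1 / 2) * Real.log (1 + (s - v₂) ^ 2) - v₂ * Real.arctan (s - v₂),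
        (-(v₂ ^ 2 / 2) * Real.arctan (s - v₂) - (v₂ / 2) * Real.log (1 + (s - v₂) ^ 2) + b * s)
          + Real.arctan (s - v₂),
        -(v₂ ^ 2 / 2) * Real.arctan (s - v₂) - (v₂ / 2) * Real.log (1 + (s - v₂) ^ 2) + b * s] :
        Fin 3 → ℝ) + u • ![1, s, s]) ![1, s, s] t := by
    intro s t
    rw [hasDerivAt_pi]
    intro i
    fin_cases i
    · simpa using (hasDerivAt_id t).const_add
        (-(1 / 2) * Real.log (1 + (s - v₂) ^ 2) - v₂ * Real.arctan (s - v₂))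
    · simpa using ((hasDerivAt_id t).mul_const s).const_add
        ((-(v₂ ^ 2 / 2 * Real.arctan (s - v₂)) - (v₂ / 2) * Real.log (1 + (s - v₂) ^ 2) + b * s)
          + Real.arctan (s - v₂))
    · simpa using ((hasDerivAt_id t).mul_const s).const_add
        (-(v₂ ^ 2 / 2 * Real.arctan (s - v₂)) - (v₂ / 2) * Real.log (1 + (s - v₂) ^ 2) + b * s)
  have hlin : ∀ s : ℝ, HasDerivAt (fun a : ℝ => (![1, a, a] : Fin 3 → ℝ)) ![0, 1, 1] s := by
    intro s
    rw [hasDerivAt_pi]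
    intro i
    fin_cases i
    · simpa using hasDerivAt_const s (1:ℝ)
    · simpa using hasDerivAt_id' s
    · simpa using hasDerivAt_id' s
  have hVss : ∀ s t : ℝ, HasDerivAt
      (fun a : ℝ => (![st17xd v₂ a, st17zd v₂ b a + st17pd v₂ a + t, st17zd v₂ b a + t] :
        Fin 3 → ℝ))
      ![st17xdd v₂ s, st17zdd v₂ b s + st17pdd v₂ s, st17zdd v₂ b s] s := by
    intro s t
    have hpd' : HasDerivAt (fun a => st17pd v₂ a) (st17pdd v₂ s) s := st17_hpd v₂ s
    rw [hasDerivAt_pi]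
    intro i
    fin_cases i
    · simpa using st17_hxd v₂ s
    · simpa using (((st17_hzd v₂ b s).add hpd').add_const t)
    · simpa using ((st17_hzd v₂ b s).add_const t)
  have hDne : ∀ s : ℝ, (1 + (s - v₂) ^ 2) ≠ 0 := fun s => (st17_hD v₂ s).ne'
  constructor
  · intro s
    rw [(hγd s).deriv]
    have h := hDne s
    simp only [mink, Matrix.cons_val_zero, Matrix.cons_val_one, Matrix.head_cons,
      Matrix.cons_val_two, Matrix.tail_cons, st17xd, st17zd, st17pd, st17ld]
    field_simp
    ring
  · intro s t
    set Xg : ℝ → ℝ → Fin 3 → ℝ := fun s t =>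
      (![-(1 / 2) * Real.log (1 + (s - v₂) ^ 2) - v₂ * Real.arctan (s - v₂),
        (-(v₂ ^ 2 / 2) * Real.arctan (s - v₂) - (v₂ / 2) * Real.log (1 + (s - v₂) ^ 2) + b * s)
          + Real.arctan (s - v₂),
        -(v₂ ^ 2 / 2) * Real.arctan (s - v₂) - (v₂ / 2) * Real.log (1 + (s - v₂) ^ 2) + b * s] :
        Fin 3 → ℝ) + t • ![1, s, s] with hXg
    intro hE
    have hpS : pS Xg s t
        = ![st17xd v₂ s, st17zd v₂ b s + st17pd v₂ s + t, st17zd v₂ b s + t] := by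
      rw [hXg]; exact (hXs s t).deriv
    have hpT : pT Xg s t = ![1, s, s] := by rw [hXg]; exact (hXt s t).deriv
    have hpTT : pTT Xg s t = 0 := by
      have hfun : (fun u : ℝ => pT Xg s u) = fun _ => ![1, s, s] := by
        funext u; rw [hXg]; exact (hXt s u).deriv
      unfold pTT; rw [hfun]; exact deriv_const _ _
    have hpST : pST Xg s t = ![0, 1, 1] := by
      have hfun : (fun a : ℝ => pT Xg a t) = fun a => ![1, a, a] := by
        funext a; rw [hXg]; exact (hXt a t).deriv
      unfold pST; rw [hfun]; exact (hlin s).deriv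
    have hpSS : pSS Xg s t
        = ![st17xdd v₂ s, st17zdd v₂ b s + st17pdd v₂ s, st17zdd v₂ b s] := by
      have hfun : (fun a : ℝ => pS Xg a t) = fun a =>
          ![st17xd v₂ a, st17zd v₂ b a + st17pd v₂ a + t, st17zd v₂ b a + t] := by
        funext a; rw [hXg]; exact (hXs a t).deriv
      unfold pSS; rw [hfun]; exact (hVss s t).deriv
    have hD := hDne s
    have hF0 : coefF Xg s t = 0 := by
      unfold coefF; rw [hpS, hpT]
      simp only [mink, Matrix.cons_val_zero, Matrix.cons_val_one, Matrix.head_cons,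
        Matrix.cons_val_two, Matrix.tail_cons, st17xd, st17zd, st17pd, st17ld]
      field_simp
      ring
    have hG1 : coefG Xg s t = 1 := by
      unfold coefG; rw [hpT]
      simp only [mink, Matrix.cons_val_zero, Matrix.cons_val_one, Matrix.head_cons,
        Matrix.cons_val_two, Matrix.tail_cons]
      ring
    have hdisc : disc Xg s t = coefE Xg s t := by
      unfold disc; rw [hF0, hG1]; ring
    refine ⟨hdisc, hdisc ▸ hE, ?_⟩
    unfold SolitonEqAt
    rw [hdisc, abs_of_pos hE, hpS, hpT, hpTT, hpSS, hpST, hF0, hG1]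
    have hcE : coefE Xg s t
        = mink ![st17xd v₂ s, st17zd v₂ b s + st17pd v₂ s + t, st17zd v₂ b s + t]
            ![st17xd v₂ s, st17zd v₂ b s + st17pd v₂ s + t, st17zd v₂ b s + t] := by
      unfold coefE; rw [hpS]
    rw [hcE]
    have h0 : det3 ![st17xd v₂ s, st17zd v₂ b s + st17pd v₂ s + t, st17zd v₂ b s + t]
        ![1, s, s] (0 : Fin 3 → ℝ) = 0 := by
      simp [det3]
    rw [h0, st17_alg v₂ b s t]
    ring
end
end

section
/- (Explicit example of a non-cylindrical ruled translating soliton.) Define X(s,t) = (log s + t, 1/(2s) + t·s, −1/(2s) + t·s) for s > 0 and t > 1/2, i.e., the ruled surface with base curve γ(s) = (log s, 1/(2s), −1/(2s)) and ruling direction w(s) = (1, s, s). Then at every such (s,t) one has EG − F² = (1 − 2t)/s² < 0 (the surface is timelike, hence non-degenerate), and X satisfies the translating soliton equation with respect to v = (1, 0, 0). -/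
noncomputable section

open Real Filter

lemma hasDerivAt_vec3_s18 {f0 f1 f2 : ℝ → ℝ} {d0 d1 d2 : ℝ} {x : ℝ}
    (h0 : HasDerivAt f0 d0 x) (h1 : HasDerivAt f1 d1 x) (h2 : HasDerivAt f2 d2 x) :
    HasDerivAt (fun a => ![f0 a, f1 a, f2 a]) ![d0, d1, d2] x := by
  apply hasDerivAt_pi.mpr
  intro i
  fin_cases i <;> simpa

lemma deriv_vec3 {f0 f1 f2 : ℝ → ℝ} {d0 d1 d2 : ℝ} {x : ℝ}
    (h0 : HasDerivAt f0 d0 x) (h1 : HasDerivAt f1 d1 x) (h2 : HasDerivAt f2 d2 x) :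
    deriv (fun a => ![f0 a, f1 a, f2 a]) x = ![d0, d1, d2] :=
  (hasDerivAt_vec3_s18 h0 h1 h2).deriv

section ex

def Xex : ℝ → ℝ → Fin 3 → ℝ :=
  fun s t => ![Real.log s + t, 1 / (2 * s) + t * s, -(1 / (2 * s)) + t * s]

lemma hd1 {s : ℝ} (hs : 0 < s) (t : ℝ) :
    HasDerivAt (fun a : ℝ => Real.log a + t) s⁻¹ s := by
  simpa using (Real.hasDerivAt_log hs.ne').add_const t

lemma hd2 {s : ℝ} (hs : 0 < s) (t : ℝ) :
    HasDerivAt (fun a : ℝ => 1 / (2 * a) + t * a) (-(1 / (2 * s ^ 2)) + t) s := by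
  have h1 : HasDerivAt (fun a : ℝ => 2 * a) 2 s := by
    simpa using (hasDerivAt_id s).const_mul 2
  have h2 := h1.inv (by positivity)
  have h3 : HasDerivAt (fun a : ℝ => t * a) t s := by
    simpa using (hasDerivAt_id s).const_mul t
  have := h2.add h3
  convert this using 1 <;> [rfl; rfl; (funext a; simp only [Pi.add_apply, Pi.inv_apply, Pi.neg_apply]); skip] <;> field_simp <;> ring

lemma hd3 {s : ℝ} (hs : 0 < s) (t : ℝ) :
    HasDerivAt (fun a : ℝ => -(1 / (2 * a)) + t * a) (1 / (2 * s ^ 2) + t) s := by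
  have h1 : HasDerivAt (fun a : ℝ => 2 * a) 2 s := by
    simpa using (hasDerivAt_id s).const_mul 2
  have h2 := (h1.inv (by positivity)).neg
  have h3 : HasDerivAt (fun a : ℝ => t * a) t s := by
    simpa using (hasDerivAt_id s).const_mul t
  have := h2.add h3
  convert this using 1 <;> [rfl; rfl; (funext a; simp only [Pi.add_apply, Pi.inv_apply, Pi.neg_apply]); skip] <;> field_simp <;> ring

lemma pS_ex {s : ℝ} (hs : 0 < s) (t : ℝ) :
    pS Xex s t = ![s⁻¹, -(1 / (2 * s ^ 2)) + t, 1 / (2 * s ^ 2) + t] := by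
  unfold pS Xex
  exact deriv_vec3 (hd1 hs t) (hd2 hs t) (hd3 hs t)

lemma pT_ex (s t : ℝ) : pT Xex s t = ![1, s, s] := by
  unfold pT Xex
  exact deriv_vec3 (by simpa using (hasDerivAt_id t).const_add (Real.log s))
    (by simpa [mul_comm] using ((hasDerivAt_id t).mul_const s).const_add (1 / (2 * s)))
    (by simpa [mul_comm] using ((hasDerivAt_id t).mul_const s).const_add (-(1 / (2 * s))))

lemma pTT_ex (s t : ℝ) : pTT Xex s t = ![0, 0, 0] := by
  unfold pTT
  have : (fun b => pT Xex s b) = fun _ => ![(1:ℝ), s, s] := funext fun b => pT_ex s b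
  rw [this]
  exact deriv_vec3 (hasDerivAt_const _ _) (hasDerivAt_const _ _) (hasDerivAt_const _ _)

lemma pST_ex (s t : ℝ) : pST Xex s t = ![0, 1, 1] := by
  unfold pST
  have : (fun a => pT Xex a t) = fun a => ![(1:ℝ), a, a] := funext fun a => pT_ex a t
  rw [this]
  exact deriv_vec3 (hasDerivAt_const _ _) (hasDerivAt_id _) (hasDerivAt_id _)

lemma pSS_ex {s : ℝ} (hs : 0 < s) (t : ℝ) :
    pSS Xex s t = ![-(1 / s ^ 2), 1 / s ^ 3, -(1 / s ^ 3)] := by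
  unfold pSS
  have hev : (fun a => pS Xex a t)
      =ᶠ[nhds s] fun a => ![a⁻¹, -(1 / (2 * a ^ 2)) + t, 1 / (2 * a ^ 2) + t] := by
    filter_upwards [eventually_gt_nhds hs] with a ha using pS_ex ha t
  rw [hev.deriv_eq]
  refine deriv_vec3 ?_ ?_ ?_
  · simpa using (hasDerivAt_inv hs.ne')
  · have h1 : HasDerivAt (fun a : ℝ => 2 * a ^ 2) (4 * s) s := by
      have h := (hasDerivAt_pow 2 s).const_mul 2
      norm_num at h
      convert h using 1 <;> [rfl; rfl; ring]
    have h2 := (h1.inv (by positivity)).neg.add_const t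
    convert h2 using 1 <;> [rfl; rfl; (funext a; simp only [Pi.add_apply, Pi.inv_apply, Pi.neg_apply]); skip] <;> field_simp <;> ring
  · have h1 : HasDerivAt (fun a : ℝ => 2 * a ^ 2) (4 * s) s := by
      have h := (hasDerivAt_pow 2 s).const_mul 2
      norm_num at h
      convert h using 1 <;> [rfl; rfl; ring]
    have h2 := (h1.inv (by positivity)).add_const t
    convert h2 using 1 <;> [rfl; rfl; (funext a; simp only [Pi.add_apply, Pi.inv_apply, Pi.neg_apply]); skip] <;> field_simp <;> ring

end ex

/-- the ruled surface `X(s,t) = (log s + t, 1/(2s) + ts, −1/(2s) + ts)`,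
`s > 0`, `t > 1/2` (base curve `γ(s) = (log s, 1/(2s), −1/(2s))`, ruling direction
`w(s) = (1,s,s)`), is timelike with `EG − F² = (1 − 2t)/s² < 0` and is a non-cylindrical
ruled translating soliton with respect to `v = (1,0,0)`. -/
theorem stmt18 :
    ∀ s t : ℝ, 0 < s → 1 / 2 < t →
      disc (fun s t => ![Real.log s + t, 1 / (2 * s) + t * s, -(1 / (2 * s)) + t * s]) s t
          = (1 - 2 * t) / s ^ 2 ∧
      disc (fun s t => ![Real.log s + t, 1 / (2 * s) + t * s, -(1 / (2 * s)) + t * s]) s t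
          < 0 ∧
      SolitonEqAt
        (fun s t => ![Real.log s + t, 1 / (2 * s) + t * s, -(1 / (2 * s)) + t * s])
        ![1, 0, 0] s t :=  by
  intro s t hs ht
  have hX : (fun s t => ![Real.log s + t, 1 / (2 * s) + t * s, -(1 / (2 * s)) + t * s]) = Xex := rfl
  rw [hX]
  have hS := pS_ex hs t
  have hT := pT_ex s t
  have hSS := pSS_ex hs t
  have hST := pST_ex s t
  have hTT := pTT_ex s t
  have hdisc : disc Xex s t = (1 - 2 * t) / s ^ 2 := by
    unfold disc coefE coefF coefG mink
    rw [hS, hT]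
    simp [Matrix.cons_val_zero, Matrix.cons_val_one]
    field_simp
    ring
  have hneg : disc Xex s t < 0 := by
    rw [hdisc]
    apply div_neg_of_neg_of_pos (by linarith) (by positivity)
  refine ⟨hdisc, hneg, ?_⟩
  unfold SolitonEqAt coefE coefF coefG det3 mink disc coefE coefF coefG mink
  rw [hS, hT, hSS, hST, hTT]
  rw [abs_of_neg (by
    have := hneg
    unfold disc coefE coefF coefG mink at this
    rwa [hS, hT] at this)]
  simp only [Matrix.cons_val_zero, Matrix.cons_val_one, Matrix.head_cons,
    Matrix.cons_val_two, Matrix.tail_cons]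
  field_simp
  ring
end
end
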